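/- arXiv:math/0207065 — 6 statements merged into one kernel-verified Lean document; each statement's English description precedes it below -/
import Mathlib

section
/- Let μ be a positive, finite Borel measure with compact support K ⊆ ℝ^d, and let m > 0. Then there exist N ≤ dim(ℝ_m[t₁,...,t_d]), nodes x₁,...,x_N ∈ K, and positive weights ρ₁,...,ρ_N such that ∫ p dμ = ∑_{k=1}^N ρ_k p(x_k) for every real polynomial p of total degree at most m. -/
open MeasureTheory MvPolynomial

/-- The closed support of a Borel measure: the set of points all of whose
neighborhoods have positive measure. -/
def msupport {E : Type*} [TopologicalSpace E] [MeasurableSpace E] (μ : Measure E) : Set E :=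
  {x | ∀ U ∈ nhds x, μ U ≠ 0}

/-- The complement of the measure-theoretic support is null (second-countable space). -/
lemma measure_msupport_compl {E : Type*} [TopologicalSpace E]
    [SecondCountableTopology E] [MeasurableSpace E]
    (μ : Measure E) : μ (msupport μ)ᶜ = 0 := by
  have h : ∀ x : ((msupport μ)ᶜ : Set E), ∃ U : Set E, IsOpen U ∧ (x : E) ∈ U ∧ μ U = 0 := by
    rintro ⟨x, hx⟩
    simp only [msupport, Set.mem_compl_iff, Set.mem_setOf_eq, not_forall] at hx
    obtain ⟨U, hU, hμU⟩ := hx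
    obtain ⟨V, hVU, hVopen, hxV⟩ := mem_nhds_iff.mp hU
    exact ⟨V, hVopen, hxV, measure_mono_null hVU (not_not.mp hμU)⟩
  choose U hUo hxU hU0 using h
  obtain ⟨T, hTc, hTU⟩ := TopologicalSpace.isOpen_iUnion_countable U hUo
  have hsub : ((msupport μ)ᶜ : Set E) ⊆ ⋃ i ∈ T, U i := by
    intro x hx
    rw [hTU]
    exact Set.mem_iUnion.2 ⟨⟨x, hx⟩, hxU _⟩
  exact measure_mono_null hsub ((measure_biUnion_null_iff hTc).2 fun i _ => hU0 i)

/-- The convex hull of a compact set in a finite-dimensional normed space is compact. -/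
lemma isCompact_convexHull_of_isCompact {E : Type*} [NormedAddCommGroup E] [NormedSpace ℝ E]
    [FiniteDimensional ℝ E] {s : Set E} (hs : IsCompact s) : IsCompact (convexHull ℝ s) := by
  classical
  rcases s.eq_empty_or_nonempty with rfl | ⟨a₀, ha₀⟩
  · simp
  set n := Module.finrank ℝ E + 1 with hn
  set T : Set ((Fin n → ℝ) × (Fin n → E)) :=
    (stdSimplex ℝ (Fin n)) ×ˢ Set.univ.pi fun _ => s with hTdef
  have hT : IsCompact T := (isCompact_stdSimplex _ _).prod (isCompact_univ_pi fun _ => hs)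
  set φ : (Fin n → ℝ) × (Fin n → E) → E := fun q => ∑ i, q.1 i • q.2 i with hφdef
  have hφ : Continuous φ := continuous_finset_sum _ fun i _ =>
    ((continuous_apply i).comp continuous_fst).smul ((continuous_apply i).comp continuous_snd)
  have himg : φ '' T = convexHull ℝ s := by
    apply Set.Subset.antisymm
    · rintro _ ⟨⟨w, z⟩, ⟨hw, hz⟩, rfl⟩
      exact (convex_convexHull ℝ s).sum_mem (fun i _ => hw.1 i) hw.2
        (fun i _ => subset_convexHull ℝ s (hz i (Set.mem_univ i)))
    · intro x hx
      obtain ⟨ι, hfin, z, w, hzs, hai, hwpos, hwsum, hwx⟩ :=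
        eq_pos_convex_span_of_mem_convexHull hx
      have hcard : Fintype.card ι ≤ n := by
        refine le_trans hai.card_le_finrank_succ ?_
        exact Nat.add_le_add_right (Submodule.finrank_le _) 1
      obtain ⟨e⟩ : Nonempty (ι ↪ Fin n) :=
        Function.Embedding.nonempty_iff_card_le.2 (by simpa using hcard)
      set w' : Fin n → ℝ := Function.extend e w 0 with hw'def
      set z' : Fin n → E := Function.extend e z fun _ => a₀ with hz'def
      have hw'e : ∀ i, w' (e i) = w i := fun i => e.injective.extend_apply w 0 i
      have hz'e : ∀ i, z' (e i) = z i := fun i => e.injective.extend_apply z _ i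
      have hw'0 : ∀ j, j ∉ Finset.univ.image e → w' j = 0 := by
        intro j hj
        have : ¬∃ i, e i = j := by
          rintro ⟨i, rfl⟩; exact hj (Finset.mem_image_of_mem e (Finset.mem_univ i))
        simp [hw'def, Function.extend_apply' _ _ _ this]
      have h1 : ∀ j, 0 ≤ w' j := by
        intro j
        by_cases hj : j ∈ Finset.univ.image e
        · obtain ⟨i, _, rfl⟩ := Finset.mem_image.mp hj
          rw [hw'e]; exact (hwpos i).le
        · rw [hw'0 j hj]
      have h2 : ∑ j, w' j = 1 := by
        calc ∑ j, w' j = ∑ j ∈ Finset.univ.image e, w' j :=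
              (Finset.sum_subset (Finset.subset_univ _) (fun j _ hj => hw'0 j hj)).symm
          _ = ∑ i, w' (e i) := Finset.sum_image (fun a _ b _ h => e.injective h)
          _ = 1 := by simp only [hw'e]; exact hwsum
      have h3 : ∀ j, z' j ∈ s := by
        intro j
        by_cases hj : ∃ i, e i = j
        · obtain ⟨i, rfl⟩ := hj
          rw [hz'e]; exact hzs (Set.mem_range_self i)
        · rw [hz'def]; simp only [Function.extend_apply' _ _ _ hj]; exact ha₀
      have h4 : φ (w', z') = x := by
        calc φ (w', z') = ∑ j, w' j • z' j := rfl
          _ = ∑ j ∈ Finset.univ.image e, w' j • z' j :=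
              (Finset.sum_subset (Finset.subset_univ _)
                (fun j _ hj => by rw [hw'0 j hj, zero_smul])).symm
          _ = ∑ i, w' (e i) • z' (e i) := Finset.sum_image (fun a _ b _ h => e.injective h)
          _ = x := by simp only [hw'e, hz'e]; exact hwx
      exact ⟨(w', z'), ⟨⟨h1, h2⟩, fun j _ => h3 j⟩, h4⟩
  rw [← himg]
  exact hT.image hφ

set_option maxHeartbeats 1000000 in
set_option synthInstance.maxHeartbeats 200000 in
/-- Tchakaloff's theorem (Putinar's version for compact support): a positive finite
Borel measure with compact support in `ℝ^d` admits a quadrature rule of any degree `m > 0`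
with size at most `dim ℝ_m[t₁,…,t_d]`. -/
theorem tchakaloff_compact (d m : ℕ) (hm : 0 < m)
    (μ : Measure (Fin d → ℝ)) [IsFiniteMeasure μ]
    (hK : IsCompact (msupport μ)) :
    ∃ N ≤ Module.finrank ℝ (restrictTotalDegree (Fin d) ℝ m),
      ∃ (x : Fin N → (Fin d → ℝ)) (ρ : Fin N → ℝ),
        (∀ k, x k ∈ msupport μ) ∧ (∀ k, 0 < ρ k) ∧
        ∀ p : MvPolynomial (Fin d) ℝ, p.totalDegree ≤ m →
          ∫ t, eval t p ∂μ = ∑ k, ρ k * eval (x k) p := by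
  classical
  set K := msupport μ with hKdef
  have hnull : μ Kᶜ = 0 := measure_msupport_compl μ
  by_cases hμ : μ = 0
  · exact ⟨0, Nat.zero_le _, Fin.elim0, Fin.elim0, (fun k => k.elim0), (fun k => k.elim0),
      fun p hp => by simp [hμ]⟩
  -- nonzero case
  haveI : NeZero μ := ⟨hμ⟩
  set V := restrictTotalDegree (Fin d) ℝ m with hV
  haveI : Module.Finite ℝ V := inferInstance
  haveI : Module.Free ℝ V := Module.Free.of_divisionRing ℝ V
  set D := Module.finrank ℝ V with hD
  set B := Module.finBasis ℝ V with hB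
  set g : (Fin d → ℝ) → (Fin D → ℝ) :=
    fun t i => eval t ((B i : MvPolynomial (Fin d) ℝ)) with hg
  have hgcont : Continuous g := continuous_pi fun i => MvPolynomial.continuous_eval _
  -- representation lemma
  have hrep : ∀ (q : V) (t : Fin d → ℝ),
      ∑ i, B.repr q i * g t i = eval t (q : MvPolynomial (Fin d) ℝ) := by
    intro q t
    conv_rhs => rw [← B.sum_repr q]
    rw [Submodule.coe_sum, map_sum]
    refine Finset.sum_congr rfl fun i _ => ?_
    rw [Submodule.coe_smul, MvPolynomial.smul_eval, hg]
  -- linear functionals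
  set lmap : V → Module.Dual ℝ (Fin D → ℝ) :=
    fun q => ∑ i, (B.repr q i) • (LinearMap.proj i : (Fin D → ℝ) →ₗ[ℝ] ℝ) with hlmap
  have happ : ∀ (q : V) (t : Fin d → ℝ),
      lmap q (g t) = eval t (q : MvPolynomial (Fin d) ℝ) := by
    intro q t
    rw [hlmap]
    simp only [LinearMap.sum_apply, LinearMap.smul_apply, LinearMap.proj_apply, smul_eq_mul]
    exact hrep q t
  have hone : (1 : MvPolynomial (Fin d) ℝ) ∈ V :=
    (mem_restrictTotalDegree _ _ _).2 (by rw [totalDegree_one]; exact Nat.zero_le m)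
  have hεg : ∀ t, lmap ⟨1, hone⟩ (g t) = 1 := by
    intro t
    rw [happ]
    exact map_one (eval t)
  have hεne : lmap ⟨1, hone⟩ ≠ 0 := by
    intro h
    have h0 := hεg 0
    rw [h] at h0
    simp at h0
  -- ae membership and integrability
  have hae : ∀ᵐ t ∂μ, t ∈ K := by
    rw [ae_iff]
    exact hnull
  obtain ⟨C, hC⟩ := hK.exists_bound_of_continuousOn hgcont.continuousOn
  have hint : Integrable g μ :=
    (integrable_const C).mono' hgcont.aestronglyMeasurable (hae.mono fun t ht => hC t ht)
  -- average lies in convex hull of the image of the support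
  set s : Set (Fin D → ℝ) := g '' K with hs
  have hscompact : IsCompact s := hK.image hgcont
  have hhull : IsCompact (convexHull ℝ s) := isCompact_convexHull_of_isCompact hscompact
  have havg : (⨍ t, g t ∂μ) ∈ convexHull ℝ s :=
    (convex_convexHull ℝ s).average_mem hhull.isClosed
      (hae.mono fun t ht => subset_convexHull ℝ s ⟨t, ht, rfl⟩) hint
  obtain ⟨ι, hfin, z, w, hzs, hai, hwpos, hwsum, hwavg⟩ :=
    eq_pos_convex_span_of_mem_convexHull havg
  have hz' : ∀ i, ∃ t, t ∈ K ∧ g t = z i := fun i => hzs (Set.mem_range_self i)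
  choose y hyK hgy using hz'
  have hεz : ∀ i, lmap ⟨1, hone⟩ (z i) = 1 := fun i => by rw [← hgy i]; exact hεg (y i)
  -- cardinality bound
  have hcard : Fintype.card ι ≤ D := by
    have h1 : vectorSpan ℝ (Set.range z) ≤ LinearMap.ker (lmap ⟨1, hone⟩) := by
      rw [vectorSpan_def, Submodule.span_le]
      rintro v hv
      obtain ⟨a, ⟨i, rfl⟩, b, ⟨j, rfl⟩, rfl⟩ := hv
      simp only [SetLike.mem_coe, LinearMap.mem_ker, vsub_eq_sub, map_sub, hεz i, hεz j,
        sub_self]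
    have h2 := hai.card_le_finrank_succ
    have h3 : Module.finrank ℝ (LinearMap.ker (lmap ⟨1, hone⟩)) + 1 = D := by
      rw [Module.Dual.finrank_ker_add_one_of_ne_zero hεne]
      simp [hD]
    calc Fintype.card ι
        ≤ Module.finrank ℝ (vectorSpan ℝ (Set.range z)) + 1 := h2
      _ ≤ Module.finrank ℝ (LinearMap.ker (lmap ⟨1, hone⟩)) + 1 :=
          Nat.add_le_add_right (Submodule.finrank_mono h1) 1
      _ = D := h3
  -- conclusion
  set c : ℝ := (μ Set.univ).toReal with hc
  have hcpos : 0 < c := ENNReal.toReal_pos (Measure.measure_univ_ne_zero.2 hμ) (measure_ne_top μ _)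
  set eqv : ι ≃ Fin (Fintype.card ι) := Fintype.equivFin ι with heqv
  refine ⟨Fintype.card ι, hcard, fun k => y (eqv.symm k), fun k => c * w (eqv.symm k),
    fun k => hyK _, fun k => mul_pos hcpos (hwpos _), ?_⟩
  intro p hp
  set q : V := ⟨p, (mem_restrictTotalDegree _ _ p).2 hp⟩ with hq
  set Lp : (Fin D → ℝ) →L[ℝ] ℝ := LinearMap.toContinuousLinearMap (lmap q) with hLp
  have hLpapp : ∀ v, Lp v = lmap q v := fun v => rfl
  have step1 : ∫ t, eval t p ∂μ = Lp (∫ t, g t ∂μ) := by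
    rw [← ContinuousLinearMap.integral_comp_comm Lp hint]
    refine integral_congr_ae (Filter.Eventually.of_forall fun t => ?_)
    show (eval t) p = Lp (g t)
    rw [hLpapp, happ]
  have step2 : ∫ t, g t ∂μ = c • ⨍ t, g t ∂μ := by
    rw [average_eq, smul_smul, show μ.real Set.univ = c from rfl, mul_inv_cancel₀ hcpos.ne', one_smul]
  have hLz : ∀ i, Lp (z i) = eval (y i) p := by
    intro i
    rw [hLpapp, ← hgy i, happ]
  rw [step1, step2, ← hwavg, _root_.map_smul, _root_.map_sum]
  simp only [_root_.map_smul, smul_eq_mul, hLz]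
  rw [Finset.mul_sum]
  refine Fintype.sum_equiv eqv (fun i => c * (w i * eval (y i) p))
    (fun k => c * w (eqv.symm k) * eval (y (eqv.symm k)) p) fun i => ?_
  simp only [Equiv.symm_apply_apply]
  ring
end

section
/- Let β = (β_i)_{|i|≤m} be a real multisequence indexed by multi-indices i ∈ ℤ₊^d with |i| ≤ m, let K ⊆ ℝ^d be closed, and let M_K(β) be the convex set of positive Borel measures ν supported in K with ∫ t^i dν = β_i for all |i| ≤ m. If ν is an extreme point of M_K(β), then ν is finitely atomic, and the number of atoms is at most the dimension of the image of ℝ_m[t₁,...,t_d] in L¹(ν). -/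
open MeasureTheory MvPolynomial

/-- The set of representing measures for the truncated real multisequence `β`,
supported in the closed set `K`: positive Borel measures `ν` with `supp ν ⊆ K` and
`∫ t^i dν = β_i` for all multi-indices `i` with `|i| ≤ m`. -/
def MKset (d m : ℕ) (K : Set (Fin d → ℝ)) (β : (Fin d → ℕ) → ℝ) :
    Set (Measure (Fin d → ℝ)) :=
  {ν | msupport ν ⊆ K ∧ ∀ i : Fin d → ℕ, (∑ k, i k) ≤ m →
      Integrable (fun t => ∏ k, t k ^ i k) ν ∧ ∫ t, ∏ k, t k ^ i k ∂ν = β i}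

/-- The linear map sending a polynomial to its class in the space of
`ν`-a.e. equivalence classes of functions (so that the image of `ℝ_m[t]` is the
image of `ℝ_m[t]` in `L¹(ν)` when the polynomials are `ν`-integrable). -/
noncomputable def polyAE (d : ℕ) (ν : Measure (Fin d → ℝ)) :
    MvPolynomial (Fin d) ℝ →ₗ[ℝ] ((Fin d → ℝ) →ₘ[ν] ℝ) where
  toFun p := AEEqFun.mk (fun t => eval t p) p.continuous_eval.aestronglyMeasurable
  map_add' p q := by
    show AEEqFun.mk _ _ = AEEqFun.mk _ _ + AEEqFun.mk _ _
    rw [AEEqFun.mk_add_mk, AEEqFun.mk_eq_mk]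
    filter_upwards with t
    simp
  map_smul' c p := by
    show AEEqFun.mk _ _ = c • AEEqFun.mk _ _
    rw [AEEqFun.smul_mk, AEEqFun.mk_eq_mk]
    filter_upwards with t
    simp [MvPolynomial.smul_eval]

section Aux

variable {d m : ℕ}

lemma integrable_eval_of_totalDegree_le (ν : Measure (Fin d → ℝ))
    (hν : ∀ i : Fin d → ℕ, (∑ k, i k) ≤ m → Integrable (fun t => ∏ k, t k ^ i k) ν)
    (p : MvPolynomial (Fin d) ℝ) (hp : p.totalDegree ≤ m) :
    Integrable (fun t => eval t p) ν := by
  have heval : ∀ t : Fin d → ℝ, eval t p = ∑ s ∈ p.support, coeff s p * ∏ k, t k ^ s k := by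
    intro t
    rw [eval_eq]
    refine Finset.sum_congr rfl fun s _ => ?_
    congr 1
    refine Finset.prod_subset (f := fun k => t k ^ s k) (Finset.subset_univ _) ?_
    intro k _ hk
    rw [Finsupp.notMem_support_iff.mp hk, pow_zero]
  have key : Integrable (fun t => ∑ s ∈ p.support, coeff s p * ∏ k, t k ^ s k) ν := by
    refine integrable_finset_sum _ fun s hs => Integrable.const_mul ?_ _
    refine hν (fun k => s k) ?_
    calc ∑ k, s k = s.sum fun _ e => e := by
          rw [Finsupp.sum]
          refine (Finset.sum_subset (Finset.subset_univ _) ?_).symm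
          intro k _ hk
          exact Finsupp.notMem_support_iff.mp hk
      _ ≤ p.totalDegree := le_totalDegree hs
      _ ≤ m := hp
  exact key.congr (Filter.Eventually.of_forall fun t => (heval t).symm)

end Aux

section Aux2

variable {d m : ℕ}

lemma finsupp_sum_univ (s : Fin d →₀ ℕ) : s.sum (fun _ e => e) = ∑ k, s k := by
  rw [Finsupp.sum]
  refine Finset.sum_subset (Finset.subset_univ _) ?_
  intro k _ hk
  exact Finsupp.notMem_support_iff.mp hk

lemma finsupp_prod_pow (t : Fin d → ℝ) (s : Fin d →₀ ℕ) :
    (s.prod fun k e => t k ^ e) = ∏ k, t k ^ s k := by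
  rw [Finsupp.prod]
  refine Finset.prod_subset (f := fun k => t k ^ s k) (Finset.subset_univ _) ?_
  intro k _ hk
  rw [Finsupp.notMem_support_iff.mp hk, pow_zero]

set_option maxHeartbeats 1000000 in
/-- The key step: there do not exist `n+1` distinct points in the support of an
extreme point `ν`, where `n` is the dimension of the image of the polynomials in `L⁰(ν)`. -/
lemma no_big_support (d m : ℕ) (K : Set (Fin d → ℝ)) (β : (Fin d → ℕ) → ℝ)
    (ν : Measure (Fin d → ℝ)) (hν : ν ∈ MKset d m K β)
    (hext : ∀ ν₁ ∈ MKset d m K β, ∀ ν₂ ∈ MKset d m K β, ∀ a b : NNReal,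
      0 < a → 0 < b → a + b = 1 → ν = a • ν₁ + b • ν₂ → ν₁ = ν ∧ ν₂ = ν)
    (x : Fin (Module.finrank ℝ ((restrictTotalDegree (Fin d) ℝ m).map (polyAE d ν)) + 1)
      → (Fin d → ℝ))
    (hxinj : Function.Injective x) (hxs : ∀ j, x j ∈ msupport ν) : False := by
  classical
  revert hxinj hxs
  revert x
  set n := Module.finrank ℝ ((restrictTotalDegree (Fin d) ℝ m).map (polyAE d ν)) with hn
  intro x hxinj hxs
  -- ν is a finite measure
  have hfin : IsFiniteMeasure ν := by
    have h1 := (hν.2 (fun _ => 0) (by simp)).1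
    simp only [pow_zero, Finset.prod_const_one] at h1
    rcases integrable_const_iff.mp h1 with h | h
    · exact absurd h one_ne_zero
    · exact h
  -- pairwise disjoint open neighborhoods of the x j
  obtain ⟨U, hU, hUdisj⟩ := (Set.finite_range x).t2_separation
  set V : Fin (n+1) → Set (Fin d → ℝ) := fun j => U (x j) with hV
  have hVopen : ∀ j, IsOpen (V j) := fun j => (hU (x j)).2
  have hVmem : ∀ j, x j ∈ V j := fun j => (hU (x j)).1
  have hVdisj : Pairwise (Function.onFun Disjoint V) := fun j k hjk =>
    hUdisj (Set.mem_range_self j) (Set.mem_range_self k) (fun h => hjk (hxinj h))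
  have hVmeas : ∀ j, MeasurableSet (V j) := fun j => (hVopen j).measurableSet
  -- integrability of polynomials of low degree
  have hintV : ∀ (p : MvPolynomial (Fin d) ℝ), p.totalDegree ≤ m → ∀ (s : Set (Fin d → ℝ)),
      Integrable (fun t => eval t p) (ν.restrict s) := fun p hp s =>
    (integrable_eval_of_totalDegree_le ν (fun i hi => (hν.2 i hi).1) p hp).restrict
  -- the local moment map
  set Ψ : restrictTotalDegree (Fin d) ℝ m →ₗ[ℝ] (Fin (n+1) → ℝ) :=
    { toFun := fun p => fun j => ∫ t in V j, eval t (p : MvPolynomial (Fin d) ℝ) ∂ν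
      map_add' := by
        intro p q
        funext j
        have h1 := hintV p ((mem_restrictTotalDegree _ _ _).mp p.2) (V j)
        have h2 := hintV q ((mem_restrictTotalDegree _ _ _).mp q.2) (V j)
        simp only [Submodule.coe_add, Pi.add_apply]
        simp_rw [map_add]
        exact integral_add h1 h2
      map_smul' := by
        intro r p
        funext j
        simp only [Submodule.coe_smul, RingHom.id_apply, Pi.smul_apply, smul_eq_mul]
        simp_rw [MvPolynomial.smul_eval]
        exact integral_const_mul r _ } with hΨ
  have hΨapp : ∀ (p : restrictTotalDegree (Fin d) ℝ m) (j : Fin (n+1)),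
      Ψ p j = ∫ t in V j, eval t (p : MvPolynomial (Fin d) ℝ) ∂ν := fun p j => rfl
  set Pi0 : restrictTotalDegree (Fin d) ℝ m →ₗ[ℝ] ((Fin d → ℝ) →ₘ[ν] ℝ) :=
    (polyAE d ν) ∘ₗ (restrictTotalDegree (Fin d) ℝ m).subtype with hPi0
  have hker : LinearMap.ker Pi0 ≤ LinearMap.ker Ψ := by
    intro p hp
    rw [LinearMap.mem_ker] at hp ⊢
    have h0 : (fun t => eval t (p : MvPolynomial (Fin d) ℝ)) =ᵐ[ν] (fun _ => (0:ℝ)) := by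
      have h1 : polyAE d ν (p : MvPolynomial (Fin d) ℝ) = 0 := hp
      have h2 : (0 : (Fin d → ℝ) →ₘ[ν] ℝ)
          = AEEqFun.mk (fun _ => (0:ℝ)) aestronglyMeasurable_const := by
        simp [AEEqFun.zero_def]
      rw [h2] at h1
      exact AEEqFun.mk_eq_mk.mp h1
    funext j
    rw [hΨapp]
    rw [integral_congr_ae (ae_restrict_of_ae h0)]
    simp
  -- rank estimate
  have hrank : Module.finrank ℝ (LinearMap.range Ψ) ≤ n := by
    have h1 : LinearMap.range Ψ = LinearMap.range ((LinearMap.ker Pi0).liftQ Ψ hker) := by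
      conv_lhs => rw [← Submodule.liftQ_mkQ (LinearMap.ker Pi0) Ψ hker]
      exact LinearMap.range_comp_of_range_eq_top _ (Submodule.range_mkQ _)
    rw [h1]
    refine (LinearMap.finrank_range_le _).trans ?_
    have h3 : Module.finrank ℝ (restrictTotalDegree (Fin d) ℝ m ⧸ LinearMap.ker Pi0)
        = Module.finrank ℝ (LinearMap.range Pi0) := (LinearMap.quotKerEquivRange Pi0).finrank_eq
    rw [h3, hn]
    have h4 : LinearMap.range Pi0 = (restrictTotalDegree (Fin d) ℝ m).map (polyAE d ν) := by
      rw [hPi0, LinearMap.range_comp, Submodule.range_subtype]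
    rw [h4]
  have hne : LinearMap.range Ψ ≠ ⊤ := by
    intro h
    rw [h, finrank_top, Module.finrank_pi, Fintype.card_fin] at hrank
    omega
  obtain ⟨φ, hφne, hφbot⟩ := Submodule.exists_dual_map_eq_bot_of_lt_top hne.lt_top inferInstance
  set ε : Fin (n+1) → ℝ := fun j => φ (fun k => if j = k then 1 else 0) with hε
  have hφapply : ∀ v : Fin (n+1) → ℝ, φ v = ∑ j, v j * ε j := by
    intro v
    rw [LinearMap.pi_apply_eq_sum_univ φ v]
    simp [hε, smul_eq_mul]
  have hφΨ : ∀ p : restrictTotalDegree (Fin d) ℝ m, ∑ j, (Ψ p) j * ε j = 0 := by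
    intro p
    rw [← hφapply]
    have h1 : Ψ p ∈ LinearMap.range Ψ := LinearMap.mem_range_self _ p
    have h2 : φ (Ψ p) ∈ (LinearMap.range Ψ).map φ := Submodule.mem_map_of_mem h1
    rw [hφbot] at h2
    exact h2
  obtain ⟨j₀, hj₀⟩ : ∃ j, ε j ≠ 0 := by
    by_contra h
    push_neg at h
    exact hφne (LinearMap.ext fun v => by rw [hφapply]; simp [h])
  set c : ℝ := 1 + ∑ j, |ε j| with hc
  have hcpos : 0 < c := by positivity
  have hεle : ∀ j, |ε j| ≤ c := by
    intro j
    have h1 : |ε j| ≤ ∑ k, |ε k| :=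
      Finset.single_le_sum (f := fun k => |ε k|) (fun k _ => abs_nonneg _) (Finset.mem_univ j)
    linarith
  set η : Fin (n+1) → ℝ := fun j => ε j / (2 * c) with hη
  have hηle : ∀ j, |η j| ≤ 1/2 := by
    intro j
    rw [hη]
    simp only []
    rw [abs_div, abs_of_pos (by linarith : (0:ℝ) < 2*c), div_le_iff₀ (by linarith)]
    calc |ε j| ≤ c := hεle j
      _ ≤ 1/2 * (2*c) := by linarith
  -- the decomposition of ν
  have hdecomp : ν = (∑ j, ν.restrict (V j)) + ν.restrict ((⋃ j, V j)ᶜ) := by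
    have h1 : ν.restrict (⋃ j, V j) = ∑ j, ν.restrict (V j) := by
      rw [Measure.restrict_iUnion hVdisj hVmeas, Measure.sum_fintype]
    rw [← h1, Measure.restrict_add_restrict_compl (MeasurableSet.iUnion fun j => hVmeas j)]
  -- vanishing of moment perturbations for monomials
  have hmono : ∀ i : Fin d → ℕ, (∑ k, i k) ≤ m →
      ∑ j, (∫ t in V j, ∏ k, t k ^ i k ∂ν) * ε j = 0 := by
    intro i hi
    set s : Fin d →₀ ℕ := Finsupp.equivFunOnFinite.symm i with hs
    have hsap : ∀ k, s k = i k := fun k => rfl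
    have hdeg : (monomial s (1:ℝ)).totalDegree ≤ m := by
      rw [totalDegree_monomial _ one_ne_zero, finsupp_sum_univ]
      simp only [hsap]
      exact hi
    have hmem : monomial s (1:ℝ) ∈ restrictTotalDegree (Fin d) ℝ m :=
      (mem_restrictTotalDegree _ _ _).mpr hdeg
    have heval : ∀ t : Fin d → ℝ, eval t (monomial s (1:ℝ)) = ∏ k, t k ^ i k := by
      intro t
      rw [eval_monomial, one_mul, finsupp_prod_pow]
      exact Finset.prod_congr rfl fun k _ => by rw [hsap]
    have h1 := hφΨ ⟨monomial s 1, hmem⟩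
    have h2 : ∀ j, Ψ ⟨monomial s 1, hmem⟩ j = ∫ t in V j, ∏ k, t k ^ i k ∂ν := by
      intro j
      rw [hΨapp]
      exact integral_congr_ae (Filter.Eventually.of_forall fun t => heval t)
    simp_rw [h2] at h1
    exact h1
  have hη1 : ∀ (σ : ℝ), |σ| = 1 → ∀ j, 0 ≤ 1 + σ * η j := by
    intro σ hσ j
    have h1 : |σ * η j| ≤ 1/2 := by
      rw [abs_mul, hσ, one_mul]; exact hηle j
    have h2 := (abs_le.mp h1).1
    linarith
  set νs : ℝ → Measure (Fin d → ℝ) := fun σ =>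
    (∑ j, ENNReal.ofReal (1 + σ * η j) • ν.restrict (V j)) + ν.restrict ((⋃ j, V j)ᶜ) with hνs
  have hclaim : ∀ σ : ℝ, |σ| = 1 → νs σ ∈ MKset d m K β := by
    intro σ hσ
    constructor
    · intro y hy
      refine hν.1 ?_
      intro W hW
      have h2 := hy W hW
      intro hWν
      refine h2 ?_
      have hres : ∀ s : Set (Fin d → ℝ), ν.restrict s W = 0 := fun s =>
        le_antisymm (le_trans (Measure.restrict_apply_le _ _) hWν.le) zero_le
      rw [hνs]
      simp only [Measure.add_apply, Measure.coe_finset_sum, Finset.sum_apply,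
        Measure.smul_apply, hres, smul_zero, Finset.sum_const_zero, add_zero]
    · intro i hi
      have hf := (hν.2 i hi).1
      have hfs : ∀ s : Set (Fin d → ℝ), Integrable (fun t => ∏ k, t k ^ i k) (ν.restrict s) :=
        fun s => hf.restrict
      have hintsum : ∀ j, Integrable (fun t => ∏ k, t k ^ i k)
          (ENNReal.ofReal (1 + σ * η j) • ν.restrict (V j)) :=
        fun j => (hfs (V j)).smul_measure ENNReal.ofReal_ne_top
      constructor
      · rw [hνs]
        refine integrable_add_measure.mpr ⟨?_, hfs _⟩
        exact integrable_finset_sum_measure.mpr fun j _ => hintsum j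
      · rw [hνs]
        simp only []
        rw [integral_add_measure (integrable_finset_sum_measure.mpr fun j _ => hintsum j) (hfs _),
          integral_finset_sum_measure fun j _ => hintsum j]
        simp_rw [integral_smul_measure, ENNReal.toReal_ofReal (hη1 σ hσ _), smul_eq_mul]
        have hbase : (∑ j, ∫ t in V j, ∏ k, t k ^ i k ∂ν)
            + (∫ t in (⋃ j, V j)ᶜ, ∏ k, t k ^ i k ∂ν) = β i := by
          rw [← (hν.2 i hi).2]
          conv_rhs => rw [hdecomp]
          rw [integral_add_measure (integrable_finset_sum_measure.mpr fun j _ => hfs _) (hfs _),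
            integral_finset_sum_measure fun j _ => hfs _]
        have hzero : ∑ j, (σ * η j) * ∫ t in V j, ∏ k, t k ^ i k ∂ν = 0 := by
          have h3 := hmono i hi
          calc ∑ j, (σ * η j) * ∫ t in V j, ∏ k, t k ^ i k ∂ν
              = (σ / (2*c)) * ∑ j, (∫ t in V j, ∏ k, t k ^ i k ∂ν) * ε j := by
                rw [Finset.mul_sum]
                refine Finset.sum_congr rfl fun j _ => ?_
                simp only [hη]
                field_simp
            _ = 0 := by rw [h3, mul_zero]
        calc (∑ j, (1 + σ * η j) * ∫ t in V j, ∏ k, t k ^ i k ∂ν)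
              + ∫ t in (⋃ j, V j)ᶜ, ∏ k, t k ^ i k ∂ν
            = ((∑ j, ∫ t in V j, ∏ k, t k ^ i k ∂ν)
              + ∫ t in (⋃ j, V j)ᶜ, ∏ k, t k ^ i k ∂ν)
              + ∑ j, (σ * η j) * ∫ t in V j, ∏ k, t k ^ i k ∂ν := by
              simp_rw [add_mul, one_mul, Finset.sum_add_distrib]
              ring
          _ = β i := by rw [hbase, hzero, add_zero]
  -- the convex combination
  have hcoe : ((1/2 : NNReal) : ENNReal) = ENNReal.ofReal (1/2) := by
    rw [show (1/2:ℝ) = ((1/2:NNReal):ℝ) by norm_num, ENNReal.ofReal_coe_nnreal]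
  have hkey : ∀ j, ((1/2 : NNReal) : ENNReal) * ENNReal.ofReal (1 + 1 * η j)
      + ((1/2 : NNReal) : ENNReal) * ENNReal.ofReal (1 + (-1) * η j) = 1 := by
    intro j
    have ha := hη1 1 (by norm_num) j
    have hb := hη1 (-1) (by norm_num) j
    rw [hcoe, ← ENNReal.ofReal_mul (by norm_num), ← ENNReal.ofReal_mul (by norm_num),
      ← ENNReal.ofReal_add (by linarith) (by linarith),
      show 1/2 * (1 + 1 * η j) + 1/2 * (1 + (-1) * η j) = 1 by ring, ENNReal.ofReal_one]
  have hhalf : (1/2 : NNReal) + 1/2 = 1 := by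
    rw [← NNReal.coe_inj]
    push_cast
    norm_num
  have hmem1 := hclaim 1 (by norm_num)
  have hmem2 := hclaim (-1) (by norm_num)
  have hA : ((1/2:NNReal):ENNReal) • ν.restrict ((⋃ j, V j)ᶜ)
      + ((1/2:NNReal):ENNReal) • ν.restrict ((⋃ j, V j)ᶜ) = ν.restrict ((⋃ j, V j)ᶜ) := by
    rw [← add_smul, ← ENNReal.coe_add, hhalf,
      ENNReal.coe_one, one_smul]
  have hconv : ν = (1/2 : NNReal) • νs 1 + (1/2 : NNReal) • νs (-1) := by
    have e1 : (1/2 : NNReal) • νs 1 = ((1/2 : NNReal) : ENNReal) • νs 1 := rfl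
    have e2 : (1/2 : NNReal) • νs (-1) = ((1/2 : NNReal) : ENNReal) • νs (-1) := rfl
    have hνs1 : νs 1 = (∑ j, ENNReal.ofReal (1 + 1 * η j) • ν.restrict (V j))
        + ν.restrict ((⋃ j, V j)ᶜ) := rfl
    have hνs2 : νs (-1) = (∑ j, ENNReal.ofReal (1 + (-1) * η j) • ν.restrict (V j))
        + ν.restrict ((⋃ j, V j)ᶜ) := rfl
    rw [e1, e2, hνs1, hνs2]
    rw [smul_add, smul_add, Finset.smul_sum, Finset.smul_sum, add_add_add_comm, hA,
      ← Finset.sum_add_distrib]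
    conv_lhs => rw [hdecomp]
    refine congrArg (fun μ : Measure (Fin d → ℝ) => μ + ν.restrict ((⋃ j, V j)ᶜ)) ?_
    refine Finset.sum_congr rfl fun j _ => ?_
    rw [← mul_smul, ← mul_smul, ← add_smul, hkey j, one_smul]
  obtain ⟨h1eq, -⟩ := hext (νs 1) (hclaim 1 (by norm_num)) (νs (-1)) (hclaim (-1) (by norm_num))
    (1/2) (1/2) (by norm_num) (by norm_num) hhalf hconv
  -- evaluate at V j₀ and derive a contradiction
  have hval : νs 1 (V j₀) = ENNReal.ofReal (1 + 1 * η j₀) * ν (V j₀) := by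
    rw [hνs]
    simp only [Measure.add_apply, Measure.coe_finset_sum, Finset.sum_apply, Measure.smul_apply,
      smul_eq_mul]
    rw [Finset.sum_eq_single j₀ ?_ (by simp)]
    · rw [Measure.restrict_apply (hVmeas j₀), Set.inter_self,
        Measure.restrict_apply (hVmeas j₀),
        show V j₀ ∩ (⋃ j, V j)ᶜ = ∅ from ?_, measure_empty, add_zero]
      ext y
      simp only [Set.mem_inter_iff, Set.mem_compl_iff, Set.mem_iUnion, Set.mem_empty_iff_false,
        iff_false, not_and, not_not]
      exact fun hy => ⟨j₀, hy⟩
    · intro j _ hj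
      rw [Measure.restrict_apply (hVmeas j₀),
        Set.disjoint_iff_inter_eq_empty.mp (hVdisj (Ne.symm hj)), measure_empty, mul_zero]
  have hVν : ν (V j₀) ≠ 0 := hxs j₀ (V j₀) ((hVopen j₀).mem_nhds (hVmem j₀))
  have hVνtop : ν (V j₀) ≠ ⊤ := measure_ne_top ν _
  have h5 : ENNReal.ofReal (1 + 1 * η j₀) * ν (V j₀) = ν (V j₀) := by rw [← hval, h1eq]
  have h6 := (ENNReal.mul_eq_right hVν hVνtop).mp h5
  rw [ENNReal.ofReal_eq_one] at h6
  have h7 : η j₀ = 0 := by linarith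
  have h8 : ε j₀ / (2 * c) = 0 := h7
  rcases div_eq_zero_iff.mp h8 with h | h
  · exact hj₀ h
  · linarith


end Aux2

set_option maxHeartbeats 1000000 in
/-- An extreme point of the convex set `M_K(β)` of representing measures for
`β^{(m)}` supported in `K` is finitely atomic, with at most
`dim (image of ℝ_m[t] in L¹(ν))` atoms. -/
theorem extreme_point_finitely_atomic (d m : ℕ) (K : Set (Fin d → ℝ))
    (β : (Fin d → ℕ) → ℝ) (ν : Measure (Fin d → ℝ))
    (hν : ν ∈ MKset d m K β)
    (hext : ∀ ν₁ ∈ MKset d m K β, ∀ ν₂ ∈ MKset d m K β, ∀ a b : NNReal,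
      0 < a → 0 < b → a + b = 1 → ν = a • ν₁ + b • ν₂ → ν₁ = ν ∧ ν₂ = ν) :
    ∃ N ≤ Module.finrank ℝ ((restrictTotalDegree (Fin d) ℝ m).map (polyAE d ν)),
      ∃ (x : Fin N → (Fin d → ℝ)) (ρ : Fin N → ℝ),
        Function.Injective x ∧ (∀ k, 0 < ρ k) ∧
        ν = ∑ k, ENNReal.ofReal (ρ k) • Measure.dirac (x k) := by
  classical
  have hnbig := no_big_support d m K β ν hν hext
  set n := Module.finrank ℝ ((restrictTotalDegree (Fin d) ℝ m).map (polyAE d ν)) with hn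
  have hfin : IsFiniteMeasure ν := by
    have h1 := (hν.2 (fun _ => 0) (by simp)).1
    simp only [pow_zero, Finset.prod_const_one] at h1
    rcases integrable_const_iff.mp h1 with h | h
    · exact absurd h one_ne_zero
    · exact h
  -- the support is finite
  have hSfin : (msupport ν).Finite := by
    by_contra h
    rw [← Set.not_infinite, not_not] at h
    have emb := Set.Infinite.natEmbedding _ h
    refine hnbig (fun j => (emb (j : ℕ) : Fin d → ℝ)) ?_ ?_
    · intro a b hab
      exact Fin.val_injective (emb.injective (Subtype.coe_injective hab))
    · intro j
      exact (emb (j : ℕ)).2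
  -- null complement of the support
  have hcompl : ν (msupport ν)ᶜ = 0 := by
    refine measure_null_of_locally_null _ fun y hy => ?_
    have h1 : ¬ (∀ U ∈ nhds y, ν U ≠ 0) := hy
    push_neg at h1
    obtain ⟨U, hU, hU0⟩ := h1
    exact ⟨U, mem_nhdsWithin_of_mem_nhds hU, hU0⟩
  set N := hSfin.toFinset.card with hN
  set e := hSfin.toFinset.equivFin with he
  set x : Fin N → (Fin d → ℝ) := fun k => (e.symm k : Fin d → ℝ) with hx
  have hxS : ∀ k, x k ∈ msupport ν := fun k => hSfin.mem_toFinset.mp (e.symm k).2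
  have hxinj : Function.Injective x := fun a b hab =>
    e.symm.injective (Subtype.coe_injective hab)
  have hNle : N ≤ n := by
    by_contra h
    push_neg at h
    refine hnbig (fun j => x (Fin.castLE h j)) ?_ (fun j => hxS _)
    exact hxinj.comp (Fin.castLE_injective h)
  -- positive point masses
  have hSmeas : MeasurableSet (msupport ν) := hSfin.measurableSet
  have hpoint : ∀ k, ν {x k} ≠ 0 := by
    intro k
    set W := (msupport ν \ {x k})ᶜ with hW
    have hWopen : IsOpen W := ((hSfin.subset Set.diff_subset).isClosed).isOpen_compl
    have hWmem : x k ∈ W := by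
      simp [hW]
    have hWne : ν W ≠ 0 := hxS k W (hWopen.mem_nhds hWmem)
    intro h0
    apply hWne
    have h1 : ν W ≤ ν (W ∩ msupport ν) + ν (W \ msupport ν) :=
      measure_le_inter_add_diff ν W _
    have h2 : ν (W ∩ msupport ν) ≤ ν {x k} := by
      refine measure_mono fun y hy => ?_
      rcases hy with ⟨hyW, hyS⟩
      have : ¬ (y ∈ msupport ν ∧ y ∉ ({x k} : Set (Fin d → ℝ))) := by
        intro hcon
        exact hyW ⟨hcon.1, hcon.2⟩
      push_neg at this
      exact this hyS
    have h3 : ν (W \ msupport ν) ≤ ν (msupport ν)ᶜ :=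
      measure_mono fun y hy => hy.2
    rw [hcompl] at h3
    have h4 : ν W = 0 := by
      have := h1.trans (add_le_add h2 h3)
      rw [h0, add_zero] at this
      exact le_antisymm this zero_le
    exact h4
  set ρ : Fin N → ℝ := fun k => (ν {x k}).toReal with hρ
  have hρpos : ∀ k, 0 < ρ k := fun k => ENNReal.toReal_pos (hpoint k) (measure_ne_top ν _)
  have hofReal : ∀ k, ENNReal.ofReal (ρ k) = ν {x k} := fun k =>
    ENNReal.ofReal_toReal (measure_ne_top ν _)
  refine ⟨N, hNle, x, ρ, hxinj, hρpos, ?_⟩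
  refine Measure.ext fun A hA => ?_
  have hAS : A ∩ msupport ν = ⋃ k ∈ Finset.univ.filter (fun k => x k ∈ A), ({x k} : Set (Fin d → ℝ)) := by
    ext y
    simp only [Set.mem_inter_iff, Set.mem_iUnion, Finset.mem_filter, Finset.mem_univ, true_and,
      Set.mem_singleton_iff]
    constructor
    · rintro ⟨hyA, hyS⟩
      refine ⟨e ⟨y, hSfin.mem_toFinset.mpr hyS⟩, ?_, ?_⟩
      · rw [hx]
        simp only [he]
        rw [Equiv.symm_apply_apply]
        exact hyA
      · rw [hx]
        simp only [he]
        rw [Equiv.symm_apply_apply]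
    · rintro ⟨k, hk, rfl⟩
      exact ⟨hk, hxS k⟩
  calc ν A = ν (A ∩ msupport ν) + ν (A \ msupport ν) := (measure_inter_add_diff A hSmeas).symm
    _ = ν (A ∩ msupport ν) := by
        have h5 : ν (A \ msupport ν) = 0 :=
          measure_mono_null (fun y hy => hy.2) hcompl
        rw [h5, add_zero]
    _ = ∑ k ∈ Finset.univ.filter (fun k => x k ∈ A), ν {x k} := by
        rw [hAS, measure_biUnion_finset ?_ fun k _ => measurableSet_singleton _]
        intro a ha b hb hab
        simp only [Function.onFun, Set.disjoint_singleton]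
        exact hxinj.ne hab
    _ = ∑ k, ν {x k} * (if x k ∈ A then 1 else 0) := by
        rw [Finset.sum_filter]
        refine Finset.sum_congr rfl fun k _ => ?_
        split <;> simp
    _ = (∑ k, ENNReal.ofReal (ρ k) • Measure.dirac (x k)) A := by
        rw [show ((∑ k, ENNReal.ofReal (ρ k) • Measure.dirac (x k)) A)
            = ∑ k, ENNReal.ofReal (ρ k) * Measure.dirac (x k) A by
          rw [Measure.coe_finset_sum, Finset.sum_apply]
          simp [Measure.smul_apply, smul_eq_mul]]
        refine Finset.sum_congr rfl fun k _ => ?_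
        rw [hofReal, Measure.dirac_apply' _ hA, Set.indicator_apply]
        simp
end

section
/- Let F be a nonempty closed subset of ℂ^d, ρ : F → [0,∞) continuous, and suppose {z ∈ F : ρ(z) ≤ r} is compact for some r > 0. Let (μ_w) be a net of finite positive Borel measures on F converging to a finite positive Borel measure μ in the sense that ∫ f dμ_w → ∫ f dμ for all f ∈ C_c(F), and suppose sup_w ∫ ρ dμ_w < ∞. Then for every continuous f : F → ℂ with f/(1+ρ) vanishing at infinity on F, one has ∫ f dμ_w → ∫ f dμ. -/
open MeasureTheory Metric
open scoped ENNReal NNReal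

noncomputable instance (d : ℕ) : MeasurableSpace (EuclideanSpace ℂ (Fin d)) := borel _
instance (d : ℕ) : BorelSpace (EuclideanSpace ℂ (Fin d)) := ⟨rfl⟩

noncomputable def stochelCutoff {X : Type*} [MetricSpace X] (x₀ : X) (R : ℝ) (x : X) : ℝ :=
  min 1 (max 0 (R + 1 - dist x x₀))

section cutoff
variable {X : Type*} [MetricSpace X] (x₀ : X) (R : ℝ)

lemma stochelCutoff_continuous : Continuous (stochelCutoff x₀ R) := by
  unfold stochelCutoff; fun_prop

lemma stochelCutoff_nonneg (x : X) : 0 ≤ stochelCutoff x₀ R x :=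
  le_min zero_le_one (le_max_left 0 _)

lemma stochelCutoff_le_one (x : X) : stochelCutoff x₀ R x ≤ 1 := min_le_left _ _

lemma stochelCutoff_eq_one {x : X} (h : dist x x₀ ≤ R) : stochelCutoff x₀ R x = 1 := by
  unfold stochelCutoff
  rw [max_eq_right (by linarith), min_eq_left (by linarith)]

lemma stochelCutoff_eq_zero {x : X} (h : R + 1 ≤ dist x x₀) : stochelCutoff x₀ R x = 0 := by
  unfold stochelCutoff
  rw [max_eq_left (by linarith), min_eq_right (by norm_num)]

lemma stochelCutoff_mono {R₁ R₂ : ℝ} (h : R₁ ≤ R₂) (x : X) :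
    stochelCutoff x₀ R₁ x ≤ stochelCutoff x₀ R₂ x := by
  unfold stochelCutoff
  exact min_le_min le_rfl (max_le_max le_rfl (by linarith))

lemma stochelCutoff_hasCompactSupport [ProperSpace X] :
    HasCompactSupport (stochelCutoff x₀ R) :=
  HasCompactSupport.intro (isCompact_closedBall x₀ (R + 1)) fun x hx =>
    stochelCutoff_eq_zero x₀ R (le_of_not_ge (by simpa [Metric.mem_closedBall] using hx))
end cutoff


set_option maxHeartbeats 1000000 in
/-- Stochel's convergence result: with `F ⊆ ℂ^d` nonempty closed, `ρ ≥ 0` continuous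
with some compact sublevel set `{ρ ≤ r}`, `r > 0`, if the net `μ_w` of finite positive
Borel measures converges to the finite positive Borel measure `μ` against all continuous
compactly supported functions and `sup_w ∫ ρ dμ_w < ∞`, then `∫ f dμ_w → ∫ f dμ` for
every continuous `f : F → ℂ` such that `f/(1+ρ)` vanishes at infinity on `F`. -/
theorem stochel_convergence (d : ℕ) (F : Set (EuclideanSpace ℂ (Fin d)))
    (hFc : IsClosed F) (hFne : F.Nonempty)
    {ι : Type*} [Preorder ι] [IsDirected ι (· ≤ ·)] [Nonempty ι]
    (μw : ι → Measure ↥F) (μ : Measure ↥F)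
    [∀ w, IsFiniteMeasure (μw w)] [IsFiniteMeasure μ]
    (ρ : ↥F → ℝ) (hρc : Continuous ρ) (hρ0 : ∀ x, 0 ≤ ρ x)
    (r : ℝ) (hr : 0 < r) (hlevel : IsCompact {x : ↥F | ρ x ≤ r})
    (hconv : ∀ f : ↥F → ℂ, Continuous f → HasCompactSupport f →
      Filter.Tendsto (fun w => ∫ x, f x ∂(μw w)) Filter.atTop (nhds (∫ x, f x ∂μ)))
    (hsup : (⨆ w, ∫⁻ x, ENNReal.ofReal (ρ x) ∂(μw w)) < ⊤)
    (f : ↥F → ℂ) (hf : Continuous f)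
    (hvanish : Filter.Tendsto (fun x : ↥F => f x / ((1 + ρ x : ℝ) : ℂ))
      (Filter.cocompact ↥F) (nhds 0)) :
    Filter.Tendsto (fun w => ∫ x, f x ∂(μw w)) Filter.atTop (nhds (∫ x, f x ∂μ)) := by
  -- the index filter is nontrivial
  haveI : (Filter.atTop : Filter ι).NeBot := Filter.atTop_neBot_iff.2 ⟨‹_›, ⟨fun x y =>
    directed_of (· ≤ ·) x y⟩⟩
  -- F is a proper metric space
  haveI : ProperSpace ↥F := by
    constructor
    intro x s
    rw [Subtype.isCompact_iff]
    have himg : Subtype.val '' (closedBall x s) = closedBall (x : EuclideanSpace ℂ (Fin d)) s ∩ F := by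
      ext y
      constructor
      · rintro ⟨z, hz, rfl⟩
        exact ⟨by simpa [Metric.mem_closedBall, Subtype.dist_eq] using hz, z.2⟩
      · rintro ⟨hy, hyF⟩
        exact ⟨⟨y, hyF⟩, by simpa [Metric.mem_closedBall, Subtype.dist_eq] using hy, rfl⟩
    rw [himg]
    exact (isCompact_closedBall _ _).inter_right hFc
  obtain ⟨x₀v, hx₀⟩ := hFne
  set x₀ : ↥F := ⟨x₀v, hx₀⟩ with hx₀def
  set C : ℝ≥0∞ := ⨆ w, ∫⁻ x, ENNReal.ofReal (ρ x) ∂(μw w) with hC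
  set cR : ℝ := C.toReal with hcR
  have hCne : C ≠ ⊤ := hsup.ne
  -- basic measurability / positivity
  have h1ρ : ∀ x : ↥F, (0:ℝ) < 1 + ρ x := fun x => by have := hρ0 x; linarith
  have h1ρC : ∀ x : ↥F, ((1 + ρ x : ℝ) : ℂ) ≠ 0 := fun x => by
    exact_mod_cast (h1ρ x).ne'
  -- ρ is integrable w.r.t. each μw w and ∫ρ ≤ cR
  have hρint : ∀ w, Integrable ρ (μw w) := by
    intro w
    refine ⟨hρc.aestronglyMeasurable, ?_⟩
    rw [hasFiniteIntegral_iff_ofReal (Filter.Eventually.of_forall hρ0)]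
    exact lt_of_le_of_lt (le_iSup (fun w => ∫⁻ x, ENNReal.ofReal (ρ x) ∂(μw w)) w) hsup
  have hρle : ∀ w, ∫ x, ρ x ∂(μw w) ≤ cR := by
    intro w
    have h := ofReal_integral_eq_lintegral_ofReal (hρint w) (Filter.Eventually.of_forall hρ0)
    have h2 : ENNReal.ofReal (∫ x, ρ x ∂(μw w)) ≤ C := by
      rw [h]; exact le_iSup (fun w => ∫⁻ x, ENNReal.ofReal (ρ x) ∂(μw w)) w
    calc ∫ x, ρ x ∂(μw w) = (ENNReal.ofReal (∫ x, ρ x ∂(μw w))).toReal :=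
          (ENNReal.toReal_ofReal (integral_nonneg hρ0)).symm
      _ ≤ cR := ENNReal.toReal_mono hCne h2
  -- a real version of the convergence hypothesis
  have hconvR : ∀ g : ↥F → ℝ, Continuous g → HasCompactSupport g →
      Filter.Tendsto (fun w => ∫ x, g x ∂(μw w)) Filter.atTop (nhds (∫ x, g x ∂μ)) := by
    intro g hgc hgs
    have h := hconv (fun x => ((g x : ℝ) : ℂ)) (Complex.continuous_ofReal.comp hgc)
      (hgs.comp_left Complex.ofReal_zero)
    have hcoe : ∀ ν : Measure ↥F, (∫ x, ((g x : ℝ) : ℂ) ∂ν) = ((∫ x, g x ∂ν : ℝ) : ℂ) :=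
      fun ν => integral_ofReal
    simp_rw [hcoe] at h
    rw [Complex.isometry_ofReal.isEmbedding.tendsto_nhds_iff]
    simpa [Function.comp_def] using h
  -- ρ is integrable w.r.t. μ
  have hρintμ : Integrable ρ μ := by
    have key : ∫⁻ x, ENNReal.ofReal (ρ x) ∂μ ≤ C := by
      have hmono : Monotone (fun (n : ℕ) (x : ↥F) =>
          ENNReal.ofReal (stochelCutoff x₀ n x * ρ x)) := by
        intro m n hmn x
        exact ENNReal.ofReal_le_ofReal (mul_le_mul_of_nonneg_right
          (stochelCutoff_mono x₀ (by exact_mod_cast hmn) x) (hρ0 x))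
      have hmeas : ∀ n : ℕ, Measurable fun x => ENNReal.ofReal (stochelCutoff x₀ n x * ρ x) :=
        fun n => ENNReal.measurable_ofReal.comp ((stochelCutoff_continuous x₀ n).mul hρc).measurable
      have hsupeq : ∀ x, (⨆ n : ℕ, ENNReal.ofReal (stochelCutoff x₀ n x * ρ x))
          = ENNReal.ofReal (ρ x) := by
        intro x
        apply le_antisymm
        · exact iSup_le fun n => ENNReal.ofReal_le_ofReal (by
            nlinarith [stochelCutoff_le_one x₀ (n : ℝ) x, stochelCutoff_nonneg x₀ (n : ℝ) x,
              hρ0 x])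
        · have h1 : stochelCutoff x₀ (⌈dist x x₀⌉₊ : ℝ) x = 1 :=
            stochelCutoff_eq_one x₀ _ (Nat.le_ceil _)
          refine le_iSup_of_le ⌈dist x x₀⌉₊ ?_
          simp [h1]
      have h1 : ∫⁻ x, ENNReal.ofReal (ρ x) ∂μ
          = ⨆ n : ℕ, ∫⁻ x, ENNReal.ofReal (stochelCutoff x₀ n x * ρ x) ∂μ := by
        rw [← lintegral_iSup hmeas hmono]
        congr 1
        ext x
        exact (hsupeq x).symm
      rw [h1]
      refine iSup_le fun n => ?_
      set gn : ↥F → ℝ := fun x => stochelCutoff x₀ n x * ρ x with hgn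
      have hgnc : Continuous gn := (stochelCutoff_continuous x₀ n).mul hρc
      have hgns : HasCompactSupport gn := (stochelCutoff_hasCompactSupport x₀ n).mul_right
      have hgnnn : ∀ x, 0 ≤ gn x := fun x =>
        mul_nonneg (stochelCutoff_nonneg x₀ n x) (hρ0 x)
      have hgnint : Integrable gn μ := hgnc.integrable_of_hasCompactSupport hgns
      rw [← ofReal_integral_eq_lintegral_ofReal hgnint (Filter.Eventually.of_forall hgnnn)]
      have hlim := hconvR gn hgnc hgns
      have hle : ∀ w, ∫ x, gn x ∂(μw w) ≤ cR := by
        intro w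
        refine le_trans (integral_mono (hgnc.integrable_of_hasCompactSupport hgns) (hρint w)
          fun x => ?_) (hρle w)
        show stochelCutoff x₀ (n : ℝ) x * ρ x ≤ ρ x
        nlinarith [stochelCutoff_le_one x₀ (n : ℝ) x, stochelCutoff_nonneg x₀ (n : ℝ) x, hρ0 x]
      have hμle : ∫ x, gn x ∂μ ≤ cR := le_of_tendsto hlim (Filter.Eventually.of_forall hle)
      calc ENNReal.ofReal (∫ x, gn x ∂μ) ≤ ENNReal.ofReal cR := ENNReal.ofReal_le_ofReal hμle
        _ = C := ENNReal.ofReal_toReal hCne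
    exact ⟨hρc.aestronglyMeasurable,
      (hasFiniteIntegral_iff_ofReal (Filter.Eventually.of_forall hρ0)).2
        (lt_of_le_of_lt key hsup)⟩
  -- bound on f
  have hnormf : ∀ x : ↥F, ‖f x‖ = ‖f x / ((1 + ρ x : ℝ) : ℂ)‖ * (1 + ρ x) := by
    intro x
    rw [norm_div, Complex.norm_real, Real.norm_eq_abs, abs_of_pos (h1ρ x)]
    rw [div_mul_cancel₀ _ (h1ρ x).ne']
  obtain ⟨B, hB0, hBf⟩ : ∃ B : ℝ, 0 ≤ B ∧ ∀ x, ‖f x‖ ≤ B * (1 + ρ x) := by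
    obtain ⟨K1, hK1c, hK1⟩ := (Filter.hasBasis_cocompact.mem_iff).1
      (hvanish (Metric.ball_mem_nhds (0 : ℂ) one_pos))
    obtain ⟨B1, hB1⟩ := hK1c.exists_bound_of_continuousOn hf.continuousOn
    refine ⟨max B1 1, le_trans zero_le_one (le_max_right _ _), fun x => ?_⟩
    by_cases hx : x ∈ K1
    · have h1 := hB1 x hx
      have h2 : B1 ≤ max B1 1 := le_max_left _ _
      nlinarith [hρ0 x, le_max_right B1 1]
    · have hgx : ‖f x / ((1 + ρ x : ℝ) : ℂ)‖ < 1 := by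
        have := hK1 hx
        simpa [Metric.mem_ball, dist_zero_right] using this
      have := hnormf x
      nlinarith [hρ0 x, norm_nonneg (f x / ((1 + ρ x : ℝ) : ℂ)), le_max_right B1 1]
  -- integrability of f
  have hfint : ∀ (ν : Measure ↥F), IsFiniteMeasure ν → Integrable ρ ν → Integrable f ν := by
    intro ν hνfin hρν
    haveI := hνfin
    refine Integrable.mono' ((integrable_const B).add (hρν.const_mul B))
      hf.aestronglyMeasurable (Filter.Eventually.of_forall fun x => ?_)
    have := hBf x
    simp only [Pi.add_apply]
    linarith [hBf x]
  -- eventual mass bound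
  have hcompl_le : ∀ w, ((μw w) {x : ↥F | ρ x ≤ r}ᶜ).toReal ≤ cR / r := by
    intro w
    have hmeasρ : Measurable fun x => ENNReal.ofReal (ρ x) :=
      ENNReal.measurable_ofReal.comp hρc.measurable
    have hmar := mul_meas_ge_le_lintegral₀ hmeasρ.aemeasurable (ENNReal.ofReal r) (μ := μw w)
    have hsub : {x : ↥F | ρ x ≤ r}ᶜ ⊆ {x : ↥F | ENNReal.ofReal r ≤ ENNReal.ofReal (ρ x)} :=
      fun x hx => ENNReal.ofReal_le_ofReal (le_of_lt (not_le.1 hx))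
    have h1 : ENNReal.ofReal r * (μw w) {x : ↥F | ρ x ≤ r}ᶜ ≤ C :=
      le_trans (mul_le_mul_right (measure_mono hsub) _)
        (le_trans hmar (le_iSup (fun w => ∫⁻ x, ENNReal.ofReal (ρ x) ∂(μw w)) w))
    have hr0 : ENNReal.ofReal r ≠ 0 := by simp [hr, ENNReal.ofReal_eq_zero, not_le]
    have h2 : (μw w) {x : ↥F | ρ x ≤ r}ᶜ ≤ C / ENNReal.ofReal r := by
      rw [ENNReal.le_div_iff_mul_le (Or.inl hr0) (Or.inl ENNReal.ofReal_ne_top)]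
      rwa [mul_comm]
    have h3 : (C / ENNReal.ofReal r) ≠ ⊤ :=
      (ENNReal.div_lt_top hCne hr0).ne
    calc ((μw w) {x : ↥F | ρ x ≤ r}ᶜ).toReal ≤ (C / ENNReal.ofReal r).toReal :=
          ENNReal.toReal_mono h3 h2
      _ = cR / r := by rw [ENNReal.toReal_div, ENNReal.toReal_ofReal hr.le]
  obtain ⟨M, hM0, hMev⟩ : ∃ M : ℝ, 0 ≤ M ∧ ∀ᶠ w in Filter.atTop,
      ((μw w) Set.univ).toReal ≤ M := by
    obtain ⟨R0, hR0⟩ := hlevel.isBounded.subset_closedBall x₀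
    set χ0 : ↥F → ℝ := stochelCutoff x₀ R0 with hχ0
    have hχ0c := stochelCutoff_continuous x₀ R0
    have hχ0s := stochelCutoff_hasCompactSupport x₀ R0
    have hχ0nn : 0 ≤ ∫ x, χ0 x ∂μ := integral_nonneg (stochelCutoff_nonneg x₀ R0)
    refine ⟨(∫ x, χ0 x ∂μ + 1) + cR / r, by positivity, ?_⟩
    have hev : ∀ᶠ w in Filter.atTop, ∫ x, χ0 x ∂(μw w) < ∫ x, χ0 x ∂μ + 1 :=
      (hconvR χ0 hχ0c hχ0s).eventually_lt_const (by linarith)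
    filter_upwards [hev] with w hw
    have hmset : MeasurableSet {x : ↥F | ρ x ≤ r} :=
      (isClosed_le hρc continuous_const).measurableSet
    have hA : ((μw w) {x : ↥F | ρ x ≤ r}).toReal ≤ ∫ x, χ0 x ∂(μw w) := by
      rw [← measureReal_def, ← integral_indicator_one hmset]
      refine integral_mono ((integrable_const (1 : ℝ)).indicator hmset)
        (hχ0c.integrable_of_hasCompactSupport hχ0s) fun x => ?_
      by_cases hx : x ∈ {x : ↥F | ρ x ≤ r}
      · rw [Set.indicator_of_mem hx]
        have : dist x x₀ ≤ R0 := by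
          have := hR0 hx
          rwa [Metric.mem_closedBall] at this
        simp [hχ0, stochelCutoff_eq_one x₀ _ this]
      · rw [Set.indicator_of_notMem hx]
        exact stochelCutoff_nonneg x₀ R0 x
    have hsplit : ((μw w) Set.univ).toReal
        ≤ ((μw w) {x : ↥F | ρ x ≤ r}).toReal + ((μw w) {x : ↥F | ρ x ≤ r}ᶜ).toReal := by
      rw [← ENNReal.toReal_add (measure_ne_top _ _) (measure_ne_top _ _)]
      refine ENNReal.toReal_mono (by
        exact ENNReal.add_ne_top.2 ⟨measure_ne_top _ _, measure_ne_top _ _⟩) ?_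
      calc (μw w) Set.univ = (μw w) ({x : ↥F | ρ x ≤ r} ∪ {x : ↥F | ρ x ≤ r}ᶜ) := by
            rw [Set.union_compl_self]
        _ ≤ _ := measure_union_le _ _
    have := hcompl_le w
    linarith
  rw [Metric.tendsto_nhds]
  intro ε hε
  set A : ℝ := (μ Set.univ).toReal + ∫ x, ρ x ∂μ with hA
  have hA0 : 0 ≤ A := add_nonneg ENNReal.toReal_nonneg (integral_nonneg hρ0)
  set M' : ℝ := M + cR with hM'
  have hM'0 : 0 ≤ M' := add_nonneg hM0 ENNReal.toReal_nonneg
  set D : ℝ := M' + A + 1 with hD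
  have hD0 : 0 < D := by positivity
  set δ : ℝ := ε / (3 * D) with hδdef
  have hδ : 0 < δ := by positivity
  obtain ⟨K, hKc, hK⟩ := (Filter.hasBasis_cocompact.mem_iff).1
    (hvanish (Metric.ball_mem_nhds (0 : ℂ) hδ))
  obtain ⟨R1, hR1⟩ := hKc.isBounded.subset_closedBall x₀
  set χ : ↥F → ℝ := stochelCutoff x₀ R1 with hχ
  have hχc := stochelCutoff_continuous x₀ R1
  have hχs := stochelCutoff_hasCompactSupport x₀ R1
  set φ : ↥F → ℂ := fun x => ((χ x : ℝ) : ℂ) * f x with hφ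
  have hφc : Continuous φ := (Complex.continuous_ofReal.comp hχc).mul hf
  have hφs : HasCompactSupport φ :=
    (hχs.comp_left (g := Complex.ofReal) Complex.ofReal_zero).mul_right
  have hpt : ∀ x, ‖f x - φ x‖ ≤ δ * (1 + ρ x) := by
    intro x
    have h01 : 0 ≤ 1 - χ x := by linarith [stochelCutoff_le_one x₀ R1 x]
    have heq : f x - φ x = (((1 - χ x : ℝ)) : ℂ) * f x := by
      rw [hφ]; push_cast; ring
    rw [heq, norm_mul, Complex.norm_real, Real.norm_eq_abs, abs_of_nonneg h01]
    by_cases hx : x ∈ K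
    · have hd : dist x x₀ ≤ R1 := by have := hR1 hx; rwa [Metric.mem_closedBall] at this
      rw [hχ, stochelCutoff_eq_one x₀ _ hd]
      simp only [sub_self, zero_mul]
      exact mul_nonneg hδ.le (h1ρ x).le
    · have hgx : ‖f x / ((1 + ρ x : ℝ) : ℂ)‖ < δ := by
        have := hK hx
        simpa [Metric.mem_ball, dist_zero_right] using this
      have hfx : ‖f x‖ ≤ δ * (1 + ρ x) := by
        rw [hnormf x]
        exact mul_le_mul_of_nonneg_right hgx.le (h1ρ x).le
      have hχ1 : χ x ≤ 1 := stochelCutoff_le_one x₀ R1 x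
      nlinarith [norm_nonneg (f x), stochelCutoff_nonneg x₀ R1 x, hfx, h01]
  have hbound : ∀ (ν : Measure ↥F) [IsFiniteMeasure ν], Integrable ρ ν →
      ‖(∫ x, f x ∂ν) - ∫ x, φ x ∂ν‖ ≤ δ * ((ν Set.univ).toReal + ∫ x, ρ x ∂ν) := by
    intro ν hνf hρν
    have hfi : Integrable f ν := hfint ν hνf hρν
    have hφi : Integrable φ ν := hφc.integrable_of_hasCompactSupport hφs
    rw [← integral_sub hfi hφi]
    have h1 : ‖∫ x, (f x - φ x) ∂ν‖ ≤ ∫ x, ‖f x - φ x‖ ∂ν := norm_integral_le_integral_norm _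
    have h2 : ∫ x, ‖f x - φ x‖ ∂ν ≤ ∫ x, δ * (1 + ρ x) ∂ν :=
      integral_mono (hfi.sub hφi).norm (((integrable_const (1 : ℝ)).add hρν).const_mul δ) hpt
    have h3 : ∫ x, δ * (1 + ρ x) ∂ν = δ * ((ν Set.univ).toReal + ∫ x, ρ x ∂ν) := by
      rw [integral_const_mul, integral_add (integrable_const 1) hρν, integral_const,
        smul_eq_mul, mul_one, measureReal_def]
    linarith
  have hmid := (Metric.tendsto_nhds.1 (hconv φ hφc hφs)) (ε / 3) (by positivity)
  filter_upwards [hmid, hMev] with w hw1 hw2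
  have hb1 := hbound (μw w) (hρint w)
  have hb2 := hbound μ hρintμ
  have hd1 : dist (∫ x, f x ∂(μw w)) (∫ x, φ x ∂(μw w)) ≤ δ * M' := by
    rw [dist_eq_norm]
    refine le_trans hb1 (mul_le_mul_of_nonneg_left ?_ hδ.le)
    rw [hM']
    linarith [hρle w]
  have hd3 : dist (∫ x, φ x ∂μ) (∫ x, f x ∂μ) ≤ δ * A := by
    rw [dist_eq_norm, norm_sub_rev]
    exact le_trans hb2 (by rw [hA])
  have htri : dist (∫ x, f x ∂(μw w)) (∫ x, f x ∂μ)
      ≤ dist (∫ x, f x ∂(μw w)) (∫ x, φ x ∂(μw w)) + dist (∫ x, φ x ∂(μw w)) (∫ x, φ x ∂μ)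
        + dist (∫ x, φ x ∂μ) (∫ x, f x ∂μ) := dist_triangle4 _ _ _ _
  have hδD : δ * D = ε / 3 := by
    rw [hδdef]
    field_simp
  have hexp : δ * M' + δ * A = δ * D - δ := by rw [hD]; ring
  linarith
end

section
/- Let μ be a representing measure for a flat truncated moment sequence γ^{(2n)} (M(n) ≥ 0, rank M(n) = rank M(n−1)). Then ∫ |z|^{2n+2} dμ(z) < ∞; in particular μ has convergent moments up to degree 2n+2. -/
open MeasureTheory
open scoped ComplexOrder
open Matrix

noncomputable instance : MeasurableSpace ℂ := borel _
instance : BorelSpace ℂ := ⟨rfl⟩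

/-- Index set for the moment matrix `M(n)`: pairs `(i, j)` with `i + j ≤ n`. -/
def MomIdx (n : ℕ) := {p : Fin (n + 1) × Fin (n + 1) // (p.1 : ℕ) + (p.2 : ℕ) ≤ n}

instance (n : ℕ) : Fintype (MomIdx n) := by unfold MomIdx; infer_instance

/-- The moment matrix `M(n)(γ)`. -/
noncomputable def momentMatrix (n : ℕ) (γ : ℕ → ℕ → ℂ) : Matrix (MomIdx n) (MomIdx n) ℂ :=
  fun r c => γ ((r.1.1 : ℕ) + (c.1.2 : ℕ)) ((r.1.2 : ℕ) + (c.1.1 : ℕ))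

/-- decidable equality on the index set -/
instance (n : ℕ) : DecidableEq (MomIdx n) := by unfold MomIdx; infer_instance

/-- `μ` is a representing measure for the truncated moment sequence `γ^{(2n)}`. -/
def IsRepr (n : ℕ) (γ : ℕ → ℕ → ℂ) (μ : Measure ℂ) : Prop :=
  ∀ i j : ℕ, i + j ≤ 2 * n →
    Integrable (fun z : ℂ => (starRingEnd ℂ) z ^ i * z ^ j) μ ∧
    ∫ z, (starRingEnd ℂ) z ^ i * z ^ j ∂μ = γ i j

/-- Flatness yields a column relation supported on `t` and lower-degree columns. -/
theorem aux_col_rel {ι κ : Type*} [Fintype ι] [DecidableEq ι] [Fintype κ]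
    (M : Matrix ι ι ℂ) (f : κ → ι) (t : ι)
    (hrank : M.rank = (M.submatrix f f).rank) (hft : ∀ s, f s ≠ t) :
    ∃ u : ι → ℂ, M *ᵥ u = 0 ∧ u t = 1 ∧ ∀ r, r ≠ t → (∀ s, f s ≠ r) → u r = 0 := by
  classical
  set col : ι → (ι → ℂ) := fun c => Mᵀ c with hcol
  set W : Submodule ℂ (ι → ℂ) := Submodule.span ℂ (Set.range (col ∘ f)) with hW
  set R : Submodule ℂ (ι → ℂ) := Submodule.span ℂ (Set.range col) with hR
  have hWR : W ≤ R := Submodule.span_mono (Set.range_comp_subset_range _ _)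
  have hWrank : (M.submatrix id f).rank = Module.finrank ℂ W := by
    have hset : Set.range (M.submatrix id f)ᵀ = Set.range (col ∘ f) := by
      ext v
      constructor
      · rintro ⟨s, rfl⟩; exact ⟨s, rfl⟩
      · rintro ⟨s, rfl⟩; exact ⟨s, rfl⟩
    rw [Matrix.rank_eq_finrank_span_cols, show Set.range (M.submatrix id f).col = Set.range (col ∘ f) from hset]
  have hRrank : M.rank = Module.finrank ℂ R := Matrix.rank_eq_finrank_span_cols M
  have hle : (M.submatrix f f).rank ≤ (M.submatrix id f).rank := by
    have h : M.submatrix f f = (1 : Matrix ι ι ℂ).submatrix f id * M.submatrix id f := by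
      have := Matrix.submatrix_mul_equiv (1 : Matrix ι ι ℂ) (M.submatrix id f)
        f (Equiv.refl ι) id
      simpa using this.symm
    rw [h]
    exact Matrix.rank_mul_le_right _ _
  have hWeqR : W = R := by
    apply Submodule.eq_of_le_of_finrank_le hWR
    rw [← hRrank, ← hWrank]
    exact hrank.le.trans hle
  have hmem : col t ∈ W := by
    rw [hWeqR]; exact Submodule.subset_span ⟨t, rfl⟩
  rw [hW, Submodule.mem_span_range_iff_exists_fun] at hmem
  obtain ⟨c, hc⟩ := hmem
  set u : ι → ℂ := (Pi.single t 1 : ι → ℂ) - ∑ s, c s • (Pi.single (f s) 1 : ι → ℂ) with hu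
  refine ⟨u, ?_, ?_, ?_⟩
  · have : M.mulVecLin u = 0 := by
      rw [hu, map_sub, map_sum]
      simp only [_root_.map_smul, Matrix.mulVecLin_apply, Matrix.mulVec_single_one]
      rw [sub_eq_zero]
      exact hc.symm
    simpa using this
  · have h1 : ∀ s, (Pi.single (f s) 1 : ι → ℂ) t = 0 :=
      fun s => Pi.single_eq_of_ne (Ne.symm (hft s)) 1
    simp [hu, h1, Pi.single_eq_same]
  · intro r hrt hfr
    have h1 : ∀ s, (Pi.single (f s) 1 : ι → ℂ) r = 0 :=
      fun s => Pi.single_eq_of_ne (Ne.symm (hfr s)) 1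
    simp [hu, h1, Pi.single_eq_of_ne hrt]

set_option linter.unusedVariables false in
/-- A representing measure `μ` for flat data `γ^{(2n)}` satisfies
`∫ |z|^{2n+2} dμ < ∞`; in particular `μ` has convergent moments up to degree `2n + 2`. -/
theorem flat_data_moments (n : ℕ) (hn : 1 ≤ n) (γ : ℕ → ℕ → ℂ)
    (hpsd : (momentMatrix n γ).PosSemidef)
    (hflat : (momentMatrix n γ).rank = (momentMatrix (n - 1) γ).rank)
    (μ : Measure ℂ) (hμ : IsRepr n γ μ) :
    Integrable (fun z : ℂ => ‖z‖ ^ (2 * n + 2)) μ ∧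
    ∀ i j : ℕ, i + j ≤ 2 * n + 2 →
      Integrable (fun z : ℂ => (starRingEnd ℂ) z ^ i * z ^ j) μ := by
  classical
  set M := momentMatrix n γ with hM
  -- the embedding of the degree-(n-1) index set
  have hle1 : n - 1 + 1 ≤ n + 1 := by omega
  set f : MomIdx (n - 1) → MomIdx n := fun s =>
    ⟨(s.1.1.castLE hle1, s.1.2.castLE hle1), by
      have := s.2; simp only [Fin.coe_castLE]; omega⟩ with hf
  have hfdeg : ∀ s, (((f s).1.1 : ℕ)) + (((f s).1.2 : ℕ)) ≤ n - 1 := fun s => by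
    simpa [hf] using s.2
  set t : MomIdx n := ⟨(0, Fin.last n), by simp⟩ with ht
  have htdeg : ((t.1.1 : ℕ)) = 0 ∧ ((t.1.2 : ℕ)) = n := by simp [ht]
  have hft : ∀ s, f s ≠ t := by
    intro s h
    have h2 := hfdeg s
    rw [h] at h2
    omega
  have hsub : momentMatrix (n - 1) γ = M.submatrix f f := by
    ext r c
    simp [momentMatrix, Matrix.submatrix, hf, hM]
  obtain ⟨u, hMu, hut, hu0⟩ := aux_col_rel M f t (by rw [← hsub]; exact hflat) hft
  -- small-degree support of u away from t
  have husupp : ∀ r : MomIdx n, u r ≠ 0 → r = t ∨ ((r.1.1 : ℕ)) + ((r.1.2 : ℕ)) ≤ n - 1 := by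
    intro r hr
    by_contra hcon
    push_neg at hcon
    refine hr (hu0 r hcon.1 (fun s hs => ?_))
    have h1 := hfdeg s
    rw [hs] at h1
    omega
  -- the polynomial p
  set p : ℂ → ℂ := fun z => ∑ r : MomIdx n,
      u r * (starRingEnd ℂ) z ^ ((r.1.2 : ℕ)) * z ^ ((r.1.1 : ℕ)) with hp
  -- expansion of |p|^2
  have hexp : ∀ z : ℂ, (starRingEnd ℂ) (p z) * p z =
      ∑ r : MomIdx n, ∑ c : MomIdx n, ((starRingEnd ℂ) (u r) * u c) *
        ((starRingEnd ℂ) z ^ ((r.1.1 : ℕ) + (c.1.2 : ℕ)) * z ^ ((r.1.2 : ℕ) + (c.1.1 : ℕ))) := by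
    intro z
    rw [hp, map_sum, Finset.sum_mul_sum]
    refine Finset.sum_congr rfl fun r _ => Finset.sum_congr rfl fun c _ => ?_
    simp only [_root_.map_mul, map_pow, Complex.conj_conj, pow_add]
    ring
  have hdeg2 : ∀ r c : MomIdx n,
      ((r.1.1 : ℕ) + (c.1.2 : ℕ)) + ((r.1.2 : ℕ) + (c.1.1 : ℕ)) ≤ 2 * n := by
    intro r c; have := r.2; have := c.2; omega
  have hint_term : ∀ r c : MomIdx n, Integrable (fun z : ℂ =>
      ((starRingEnd ℂ) (u r) * u c) *
        ((starRingEnd ℂ) z ^ ((r.1.1 : ℕ) + (c.1.2 : ℕ)) * z ^ ((r.1.2 : ℕ) + (c.1.1 : ℕ)))) μ :=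
    fun r c => ((hμ _ _ (hdeg2 r c)).1).const_mul _
  have hintp : Integrable (fun z => (starRingEnd ℂ) (p z) * p z) μ := by
    have : Integrable (fun z : ℂ => ∑ r : MomIdx n, ∑ c : MomIdx n,
        ((starRingEnd ℂ) (u r) * u c) *
        ((starRingEnd ℂ) z ^ ((r.1.1 : ℕ) + (c.1.2 : ℕ)) * z ^ ((r.1.2 : ℕ) + (c.1.1 : ℕ)))) μ :=
      integrable_finset_sum _ fun r _ => integrable_finset_sum _ fun c _ => hint_term r c
    exact this.congr (Filter.Eventually.of_forall fun z => (hexp z).symm)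
  have hint0 : ∫ z, (starRingEnd ℂ) (p z) * p z ∂μ = 0 := by
    calc ∫ z, (starRingEnd ℂ) (p z) * p z ∂μ
        = ∑ r : MomIdx n, ∑ c : MomIdx n, ((starRingEnd ℂ) (u r) * u c) *
            γ ((r.1.1 : ℕ) + (c.1.2 : ℕ)) ((r.1.2 : ℕ) + (c.1.1 : ℕ)) := by
          rw [integral_congr_ae (Filter.Eventually.of_forall hexp)]
          rw [integral_finset_sum _ fun r _ => integrable_finset_sum _ fun c _ => hint_term r c]
          refine Finset.sum_congr rfl fun r _ => ?_
          rw [integral_finset_sum _ fun c _ => hint_term r c]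
          refine Finset.sum_congr rfl fun c _ => ?_
          rw [integral_const_mul, (hμ _ _ (hdeg2 r c)).2]
      _ = ∑ r : MomIdx n, (starRingEnd ℂ) (u r) * (M *ᵥ u) r := by
          refine Finset.sum_congr rfl fun r _ => ?_
          rw [Matrix.mulVec, dotProduct, Finset.mul_sum]
          refine Finset.sum_congr rfl fun c _ => ?_
          rw [hM]; unfold momentMatrix; ring
      _ = 0 := by rw [hMu]; simp
  -- p = 0 a.e.
  have hp0 : ∀ᵐ z ∂μ, p z = 0 := by
    have hofReal : (fun z => (starRingEnd ℂ) (p z) * p z)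
        = fun z => ((Complex.normSq (p z) : ℝ) : ℂ) := by
      funext z; rw [← Complex.normSq_eq_conj_mul_self]
    have hintR : Integrable (fun z => Complex.normSq (p z)) μ := by
      have := hintp.re
      simpa [hofReal, Complex.normSq_apply] using this
    have h0 : ∫ z, Complex.normSq (p z) ∂μ = 0 := by
      have h2 := integral_re hintp
      rw [hint0] at h2
      simp only [Complex.zero_re, RCLike.re_to_complex] at h2
      rw [← h2]
      refine integral_congr_ae (Filter.Eventually.of_forall fun z => ?_)
      simp [Complex.normSq_apply, Complex.mul_re]
    have := (integral_eq_zero_iff_of_nonneg (fun z => Complex.normSq_nonneg (p z)) hintR).mp h0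
    filter_upwards [this] with z hz
    exact Complex.normSq_eq_zero.mp hz
  -- the lower-degree part q and Q = z * q
  set u' : MomIdx n → ℂ := fun r => if r = t then 0 else u r with hu'
  have hu'supp : ∀ r : MomIdx n, u' r ≠ 0 → ((r.1.1 : ℕ)) + ((r.1.2 : ℕ)) ≤ n - 1 := by
    intro r hr
    rw [hu'] at hr
    by_cases h : r = t
    · simp [h] at hr
    · rcases husupp r (by simpa [h] using hr) with h' | h'
      · exact absurd h' h
      · exact h'
  set Q : ℂ → ℂ := fun z => ∑ r : MomIdx n,
      u' r * (starRingEnd ℂ) z ^ ((r.1.2 : ℕ)) * z ^ ((r.1.1 : ℕ) + 1) with hQ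
  have hpq : ∀ z : ℂ, p z = (starRingEnd ℂ) z ^ n +
      ∑ r : MomIdx n, u' r * (starRingEnd ℂ) z ^ ((r.1.2 : ℕ)) * z ^ ((r.1.1 : ℕ)) := by
    intro z
    simp only [hp]
    have : ∀ r : MomIdx n, u r * (starRingEnd ℂ) z ^ ((r.1.2 : ℕ)) * z ^ ((r.1.1 : ℕ))
        = (if r = t then (starRingEnd ℂ) z ^ n else 0)
          + u' r * (starRingEnd ℂ) z ^ ((r.1.2 : ℕ)) * z ^ ((r.1.1 : ℕ)) := by
      intro r
      by_cases h : r = t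
      · subst h; rw [hu']; simp [hut, htdeg.1, htdeg.2]
      · rw [hu']; simp [h]
    rw [Finset.sum_congr rfl fun r _ => this r, Finset.sum_add_distrib,
      Finset.sum_ite_eq' Finset.univ t (fun _ => (starRingEnd ℂ) z ^ n)]
    simp
  -- a.e. identity |z|^(2n+2) = normSq (Q z)
  have hrel : ∀ᵐ z ∂μ, ‖z‖ ^ (2 * n + 2) = Complex.normSq (Q z) := by
    filter_upwards [hp0] with z hz
    have hq : (starRingEnd ℂ) z ^ n
        = -∑ r : MomIdx n, u' r * (starRingEnd ℂ) z ^ ((r.1.2 : ℕ)) * z ^ ((r.1.1 : ℕ)) := by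
      have := hpq z
      rw [hz] at this
      linear_combination -this
    have hQz : Q z = -(z * (starRingEnd ℂ) z ^ n) := by
      rw [hQ, hq]
      simp only [neg_mul, mul_neg, neg_neg, Finset.mul_sum]
      refine Finset.sum_congr rfl fun r _ => ?_
      ring
    have : ‖Q z‖ = ‖z‖ ^ (n + 1) := by
      rw [hQz]
      simp [_root_.map_mul, map_pow, pow_succ, mul_comm]
    rw [← Complex.sq_norm, this, ← pow_mul]
    ring_nf
  -- integrability of normSq ∘ Q
  have hintQ : Integrable (fun z => Complex.normSq (Q z)) μ := by
    have hexpQ : ∀ z : ℂ, (starRingEnd ℂ) (Q z) * Q z =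
        ∑ r : MomIdx n, ∑ c : MomIdx n, ((starRingEnd ℂ) (u' r) * u' c) *
          ((starRingEnd ℂ) z ^ (((r.1.1 : ℕ) + 1) + (c.1.2 : ℕ)) *
            z ^ ((r.1.2 : ℕ) + ((c.1.1 : ℕ) + 1))) := by
      intro z
      rw [hQ, map_sum, Finset.sum_mul_sum]
      refine Finset.sum_congr rfl fun r _ => Finset.sum_congr rfl fun c _ => ?_
      simp only [_root_.map_mul, map_pow, Complex.conj_conj, pow_add]
      ring
    have hterm : ∀ r c : MomIdx n, Integrable (fun z : ℂ =>
        ((starRingEnd ℂ) (u' r) * u' c) *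
          ((starRingEnd ℂ) z ^ (((r.1.1 : ℕ) + 1) + (c.1.2 : ℕ)) *
            z ^ ((r.1.2 : ℕ) + ((c.1.1 : ℕ) + 1)))) μ := by
      intro r c
      by_cases hr : u' r = 0
      · simp [hr]
      by_cases hc : u' c = 0
      · simp [hc]
      have h1 := hu'supp r hr
      have h2 := hu'supp c hc
      exact ((hμ _ _ (by omega)).1).const_mul _
    have hQint : Integrable (fun z => (starRingEnd ℂ) (Q z) * Q z) μ := by
      have : Integrable (fun z : ℂ => ∑ r : MomIdx n, ∑ c : MomIdx n,
          ((starRingEnd ℂ) (u' r) * u' c) *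
          ((starRingEnd ℂ) z ^ (((r.1.1 : ℕ) + 1) + (c.1.2 : ℕ)) *
            z ^ ((r.1.2 : ℕ) + ((c.1.1 : ℕ) + 1)))) μ :=
        integrable_finset_sum _ fun r _ => integrable_finset_sum _ fun c _ => hterm r c
      exact this.congr (Filter.Eventually.of_forall fun z => (hexpQ z).symm)
    have := hQint.re
    have heq : (fun z => (starRingEnd ℂ) (Q z) * Q z)
        = fun z => ((Complex.normSq (Q z) : ℝ) : ℂ) := by
      funext z; rw [← Complex.normSq_eq_conj_mul_self]
    simpa [heq, Complex.normSq_apply] using this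
  -- first conclusion
  have habs : Integrable (fun z : ℂ => ‖z‖ ^ (2 * n + 2)) μ :=
    hintQ.congr (by filter_upwards [hrel] with z hz; exact hz.symm)
  refine ⟨habs, ?_⟩
  -- second conclusion
  intro i j hij
  have h1 : Integrable (fun _ : ℂ => (1 : ℝ)) μ := by
    have := (hμ 0 0 (by omega)).1
    simpa using this.norm
  have hg : Integrable (fun z : ℂ => 1 + ‖z‖ ^ (2 * n + 2)) μ := h1.add habs
  refine hg.mono ?_ ?_
  · exact (((Complex.continuous_conj.pow i).mul (continuous_pow j)).aestronglyMeasurable)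
  · refine Filter.Eventually.of_forall fun z => ?_
    have hnn : (0:ℝ) ≤ 1 + ‖z‖ ^ (2 * n + 2) := by positivity
    rw [Real.norm_of_nonneg hnn]
    have hnorm : ‖(starRingEnd ℂ) z ^ i * z ^ j‖ = ‖z‖ ^ (i + j) := by
      simp [norm_mul, norm_pow, pow_add]
    rw [hnorm]
    by_cases h : ‖z‖ ≤ 1
    · have := pow_le_one₀ (norm_nonneg z) h (n := i + j)
      nlinarith [pow_nonneg (norm_nonneg z) (2 * n + 2)]
    · push_neg at h
      have h2 : ‖z‖ ^ (i + j) ≤ ‖z‖ ^ (2 * n + 2) :=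
        pow_le_pow_right₀ h.le hij
      linarith
end

section
/- Let p(z,z̄) = z^k − q(z,z̄) where q is a complex polynomial in z and z̄ of total degree at most k−1. Then p has at most k² zeros in ℂ. -/
open Finset

private lemma card_le_aux (k : ℕ) (a : ℕ → ℕ → ℂ) (t : Finset ℂ)
    (ht : ∀ z ∈ t, z ^ k = ∑ i ∈ Finset.range k, ∑ j ∈ Finset.range (k - i),
        a i j * (starRingEnd ℂ) z ^ i * z ^ j) : t.card ≤ k ^ 2 := by
  rcases Nat.eq_zero_or_pos k with hk | hk
  · subst hk
    have : t = ∅ := by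
      by_contra h
      obtain ⟨z, hz⟩ := Finset.nonempty_iff_ne_empty.mpr h
      have := ht z hz
      simp at this
    simp [this]
  -- the evaluation linear map
  set f : ℕ → ℕ → (↥t → ℂ) := fun p q => fun z => (starRingEnd ℂ) (z : ℂ) ^ p * (z : ℂ) ^ q with hf
  let L : ((Fin k × Fin k) → ℂ) →ₗ[ℂ] (↥t → ℂ) :=
    { toFun := fun c => fun z => ∑ p : Fin k × Fin k,
        c p * ((starRingEnd ℂ) (z : ℂ) ^ (p.1 : ℕ) * (z : ℂ) ^ (p.2 : ℕ))
      map_add' := by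
        intro x y; funext z; simp [add_mul, Finset.sum_add_distrib]
      map_smul' := by
        intro m x; funext z; simp [Finset.mul_sum, mul_assoc] }
  -- key reduction: every monomial function lies in the range of L
  have mem : ∀ N p q, p + q = N → f p q ∈ LinearMap.range L := by
    intro N
    induction N using Nat.strong_induction_on with
    | _ N IH =>
      intro p q hpq
      by_cases hq : k ≤ q
      · -- reduce z^q using the relation
        have heq : f p q = ∑ i ∈ Finset.range k, ∑ j ∈ Finset.range (k - i),
            a i j • f (p + i) (q - k + j) := by
          funext z
          have hz := ht z z.2
          simp only [hf, Finset.sum_apply, Pi.smul_apply, smul_eq_mul]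
          calc (starRingEnd ℂ) (z:ℂ) ^ p * (z:ℂ) ^ q
              = ((starRingEnd ℂ) (z:ℂ) ^ p * (z:ℂ) ^ (q - k)) * (z:ℂ) ^ k := by
                rw [mul_assoc, ← pow_add, Nat.sub_add_cancel hq]
            _ = _ := by
                rw [hz, Finset.mul_sum]
                refine Finset.sum_congr rfl fun i _ => ?_
                rw [Finset.mul_sum]
                refine Finset.sum_congr rfl fun j _ => ?_
                rw [pow_add, pow_add]; ring
        rw [heq]
        refine Submodule.sum_mem _ fun i hi => Submodule.sum_mem _ fun j hj => ?_
        refine Submodule.smul_mem _ _ (IH ((p + i) + (q - k + j)) ?_ _ _ rfl)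
        have hik := Finset.mem_range.mp hi
        have hjk := Finset.mem_range.mp hj
        omega
      · by_cases hp : k ≤ p
        · -- reduce (conj z)^p using the conjugated relation
          have heq : f p q = ∑ i ∈ Finset.range k, ∑ j ∈ Finset.range (k - i),
              (starRingEnd ℂ) (a i j) • f (p - k + j) (q + i) := by
            funext z
            have hz := ht z z.2
            have hzc : (starRingEnd ℂ) (z:ℂ) ^ k = ∑ i ∈ Finset.range k, ∑ j ∈ Finset.range (k - i),
                (starRingEnd ℂ) (a i j) * (z:ℂ) ^ i * (starRingEnd ℂ) (z:ℂ) ^ j := by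
              have := congrArg (starRingEnd ℂ) hz
              simpa [map_sum, map_mul, map_pow] using this
            simp only [hf, Finset.sum_apply, Pi.smul_apply, smul_eq_mul]
            calc (starRingEnd ℂ) (z:ℂ) ^ p * (z:ℂ) ^ q
                = ((starRingEnd ℂ) (z:ℂ) ^ (p - k) * (z:ℂ) ^ q) * (starRingEnd ℂ) (z:ℂ) ^ k := by
                  rw [mul_right_comm, ← pow_add, Nat.sub_add_cancel hp]
              _ = _ := by
                  rw [hzc, Finset.mul_sum]
                  refine Finset.sum_congr rfl fun i _ => ?_
                  rw [Finset.mul_sum]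
                  refine Finset.sum_congr rfl fun j _ => ?_
                  rw [pow_add, pow_add]; ring
          rw [heq]
          refine Submodule.sum_mem _ fun i hi => Submodule.sum_mem _ fun j hj => ?_
          refine Submodule.smul_mem _ _ (IH ((p - k + j) + (q + i)) ?_ _ _ rfl)
          have hik := Finset.mem_range.mp hi
          have hjk := Finset.mem_range.mp hj
          omega
        · -- generator case p < k, q < k
          push_neg at hp hq
          refine ⟨Pi.single (⟨p, hp⟩, ⟨q, hq⟩) 1, ?_⟩
          funext z
          simp only [hf, L, LinearMap.coe_mk, AddHom.coe_mk]
          rw [Finset.sum_eq_single (⟨p, hp⟩, ⟨q, hq⟩)]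
          · simp
          · intro b _ hb; simp [Pi.single_apply, hb]
          · intro h; exact absurd (Finset.mem_univ _) h
  -- L is surjective via Lagrange interpolation
  have hsurj : Function.Surjective L := by
    intro φ
    set φ' : ℂ → ℂ := fun z => if h : z ∈ t then φ ⟨z, h⟩ else 0 with hφ'
    set P := Lagrange.interpolate t id φ' with hP
    have hev : ∀ z : ↥t, P.eval (z : ℂ) = φ z := by
      intro z
      have := Lagrange.eval_interpolate_at_node (s := t) (v := id) (r := φ')
        (Set.injOn_id _) z.2
      exact (show P.eval (z : ℂ) = φ' z from this).trans (by simp [hφ', z.2])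
    have hmem : φ ∈ LinearMap.range L := by
      have : φ = ∑ i ∈ Finset.range (P.natDegree + 1), P.coeff i • f 0 i := by
        funext z
        rw [← hev z, Polynomial.eval_eq_sum_range]
        simp [hf]
      rw [this]
      exact Submodule.sum_mem _ fun i _ => Submodule.smul_mem _ _ (mem i 0 i (by omega))
    exact hmem
  -- conclude via finrank
  have h1 : Module.finrank ℂ (↥t → ℂ) ≤ Module.finrank ℂ ((Fin k × Fin k) → ℂ) := by
    have := LinearMap.finrank_range_le L
    rwa [LinearMap.range_eq_top.mpr hsurj, finrank_top] at this
  have h2 : Module.finrank ℂ (↥t → ℂ) = t.card := by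
    rw [Module.finrank_fintype_fun_eq_card, Fintype.card_coe]
  have h3 : Module.finrank ℂ ((Fin k × Fin k) → ℂ) = k ^ 2 := by
    rw [Module.finrank_fintype_fun_eq_card, Fintype.card_prod, Fintype.card_fin, sq]
  omega

/-- A polynomial of the form `p(z, z̄) = z^k − q(z, z̄)` with `deg q ≤ k − 1`
has at most `k²` roots in `ℂ`. -/
theorem zeros_of_zk_minus_q (k : ℕ) (a : ℕ → ℕ → ℂ) :
    ({z : ℂ | z ^ k = ∑ i ∈ Finset.range k, ∑ j ∈ Finset.range (k - i),
        a i j * (starRingEnd ℂ) z ^ i * z ^ j}).Finite ∧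
    Set.ncard {z : ℂ | z ^ k = ∑ i ∈ Finset.range k, ∑ j ∈ Finset.range (k - i),
        a i j * (starRingEnd ℂ) z ^ i * z ^ j} ≤ k ^ 2 := by
  set S : Set ℂ := {z : ℂ | z ^ k = ∑ i ∈ Finset.range k, ∑ j ∈ Finset.range (k - i),
        a i j * (starRingEnd ℂ) z ^ i * z ^ j} with hS
  have key : ∀ u : Finset ℂ, ↑u ⊆ S → u.card ≤ k ^ 2 := by
    intro u hu
    exact card_le_aux k a u fun z hz => hu hz
  have hfin : S.Finite := by
    by_contra h
    have hinf : S.Infinite := h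
    obtain ⟨u, hu, hcard⟩ := hinf.exists_subset_card_eq (k ^ 2 + 1)
    have := key u hu
    omega
  refine ⟨hfin, ?_⟩
  rw [Set.ncard_eq_toFinset_card S hfin]
  exact key _ (by simp)
end

section
/- If γ^{(2n)} has a representing measure and M(n)(γ) admits an analytic relation Z^k = ∑_{0≤i+j<k} a_ij Z̄^i Z^j for some k ≤ n, then γ^{(2n)} has a unique representing measure, which is finitely atomic with at most k² atoms. -/
open MeasureTheory
open scoped ComplexOrder

namespace CF


/-- monomial function restricted to a finite set -/
noncomputable def monoS (S : Finset ℂ) (i j : ℕ) : {z // z ∈ S} → ℂ :=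
  fun z => (starRingEnd ℂ) (z : ℂ) ^ i * (z : ℂ) ^ j

noncomputable def Wlow (k : ℕ) (S : Finset ℂ) : Submodule ℂ ({z // z ∈ S} → ℂ) :=
  Submodule.span ℂ (Set.range fun p : Fin k × Fin k => monoS S (p.1 : ℕ) (p.2 : ℕ))

noncomputable def Wall (S : Finset ℂ) : Submodule ℂ ({z // z ∈ S} → ℂ) :=
  Submodule.span ℂ (Set.range fun p : ℕ × ℕ => monoS S p.1 p.2)

lemma mono_mem_Wlow {n k : ℕ} (hk : 1 ≤ k) (B : MomIdx n → ℂ)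
    (hB : ∀ c : MomIdx n, ¬ ((c.1.1 : ℕ) + (c.1.2 : ℕ) < k) → B c = 0)
    (S : Finset ℂ)
    (hz : ∀ z ∈ S, z ^ k =
      ∑ c : MomIdx n, B c * (starRingEnd ℂ) z ^ (c.1.1 : ℕ) * z ^ (c.1.2 : ℕ)) :
    ∀ i j : ℕ, monoS S i j ∈ Wlow k S := by
  have hzc : ∀ z ∈ S, (starRingEnd ℂ) z ^ k =
      ∑ c : MomIdx n, (starRingEnd ℂ) (B c) * z ^ (c.1.1 : ℕ) * (starRingEnd ℂ) z ^ (c.1.2 : ℕ) := by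
    intro z hzS
    have h := congrArg (starRingEnd ℂ) (hz z hzS)
    simpa [map_pow, map_sum, map_mul] using h
  suffices H : ∀ d i j, i + j ≤ d → monoS S i j ∈ Wlow k S by
    exact fun i j => H (i + j) i j le_rfl
  intro d
  induction d using Nat.strong_induction_on with
  | _ d ih =>
    intro i j hij
    by_cases hjk : k ≤ j
    · have hfun : monoS S i j = ∑ c : MomIdx n,
          B c • monoS S (i + (c.1.1 : ℕ)) (j - k + (c.1.2 : ℕ)) := by
        funext z
        rw [Finset.sum_apply]
        simp only [monoS, Pi.smul_apply, smul_eq_mul]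
        have h1 : (z : ℂ) ^ j = (z : ℂ) ^ (j - k) * (z : ℂ) ^ k := by
          rw [← pow_add]; congr 1; omega
        rw [h1, hz z z.2, Finset.mul_sum, Finset.mul_sum]
        refine Finset.sum_congr rfl fun c _ => ?_
        simp only [pow_add]; ring
      rw [hfun]
      refine Submodule.sum_mem _ fun c _ => ?_
      by_cases hck : (c.1.1 : ℕ) + (c.1.2 : ℕ) < k
      · exact Submodule.smul_mem _ _
          (ih (i + (c.1.1 : ℕ) + (j - k + (c.1.2 : ℕ))) (by omega) _ _ le_rfl)
      · rw [hB c hck, zero_smul]; exact Submodule.zero_mem _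
    · by_cases hik : k ≤ i
      · have hfun : monoS S i j = ∑ c : MomIdx n,
            (starRingEnd ℂ) (B c) • monoS S (i - k + (c.1.2 : ℕ)) (j + (c.1.1 : ℕ)) := by
          funext z
          rw [Finset.sum_apply]
          simp only [monoS, Pi.smul_apply, smul_eq_mul]
          have h1 : (starRingEnd ℂ) (z : ℂ) ^ i
              = (starRingEnd ℂ) (z : ℂ) ^ (i - k) * (starRingEnd ℂ) (z : ℂ) ^ k := by
            rw [← pow_add]; congr 1; omega
          rw [h1, hzc z z.2, Finset.mul_sum, Finset.sum_mul]
          refine Finset.sum_congr rfl fun c _ => ?_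
          simp only [pow_add]; ring
        rw [hfun]
        refine Submodule.sum_mem _ fun c _ => ?_
        by_cases hck : (c.1.1 : ℕ) + (c.1.2 : ℕ) < k
        · exact Submodule.smul_mem _ _
            (ih (i - k + (c.1.2 : ℕ) + (j + (c.1.1 : ℕ))) (by omega) _ _ le_rfl)
        · rw [hB c hck, map_zero, zero_smul]; exact Submodule.zero_mem _
      · push_neg at hjk hik
        exact Submodule.subset_span ⟨(⟨i, hik⟩, ⟨j, hjk⟩), rfl⟩

lemma factor_mul_mem_Wall (S : Finset ℂ) (w : ℂ) {g : {z // z ∈ S} → ℂ} (hg : g ∈ Wall S) :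
    (fun z : {z // z ∈ S} =>
      ((z : ℂ) - w) * ((starRingEnd ℂ) (z : ℂ) - (starRingEnd ℂ) w) * g z) ∈ Wall S := by
  induction hg using Submodule.span_induction with
  | mem x hx =>
    obtain ⟨⟨i, j⟩, rfl⟩ := hx
    have hfun : (fun z : {z // z ∈ S} =>
        ((z : ℂ) - w) * ((starRingEnd ℂ) (z : ℂ) - (starRingEnd ℂ) w) * monoS S i j z)
        = monoS S (i + 1) (j + 1) + (-(starRingEnd ℂ) w) • monoS S i (j + 1)
          + (-w) • monoS S (i + 1) j + (w * (starRingEnd ℂ) w) • monoS S i j := by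
      funext z
      simp only [monoS, Pi.add_apply, Pi.smul_apply, smul_eq_mul, pow_succ]
      ring
    rw [hfun]
    refine Submodule.add_mem _ (Submodule.add_mem _ (Submodule.add_mem _ ?_ ?_) ?_) ?_
    · exact Submodule.subset_span ⟨(i + 1, j + 1), rfl⟩
    · exact Submodule.smul_mem _ _ (Submodule.subset_span ⟨(i, j + 1), rfl⟩)
    · exact Submodule.smul_mem _ _ (Submodule.subset_span ⟨(i + 1, j), rfl⟩)
    · exact Submodule.smul_mem _ _ (Submodule.subset_span ⟨(i, j), rfl⟩)
  | zero =>
    convert Submodule.zero_mem (Wall S) using 1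
    funext z; simp
  | add x y hx hy hx' hy' =>
    have : (fun z : {z // z ∈ S} =>
        ((z : ℂ) - w) * ((starRingEnd ℂ) (z : ℂ) - (starRingEnd ℂ) w) * (x + y) z)
        = (fun z : {z // z ∈ S} =>
            ((z : ℂ) - w) * ((starRingEnd ℂ) (z : ℂ) - (starRingEnd ℂ) w) * x z)
          + fun z : {z // z ∈ S} =>
            ((z : ℂ) - w) * ((starRingEnd ℂ) (z : ℂ) - (starRingEnd ℂ) w) * y z := by
      funext z; simp [mul_add]
    rw [this]; exact Submodule.add_mem _ hx' hy'
  | smul c x hx hx' =>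
    have : (fun z : {z // z ∈ S} =>
        ((z : ℂ) - w) * ((starRingEnd ℂ) (z : ℂ) - (starRingEnd ℂ) w) * (c • x) z)
        = c • fun z : {z // z ∈ S} =>
            ((z : ℂ) - w) * ((starRingEnd ℂ) (z : ℂ) - (starRingEnd ℂ) w) * x z := by
      funext z; simp [smul_eq_mul]; ring
    rw [this]; exact Submodule.smul_mem _ _ hx'

lemma prod_mem_Wall (S : Finset ℂ) (T : Finset ℂ) :
    (fun z : {z // z ∈ S} => ∏ w ∈ T,
      (((z : ℂ) - w) * ((starRingEnd ℂ) (z : ℂ) - (starRingEnd ℂ) w))) ∈ Wall S := by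
  classical
  induction T using Finset.induction with
  | empty =>
    have h1 : (fun _ : {z // z ∈ S} => (1 : ℂ)) ∈ Wall S := by
      have heq : (fun _ : {z // z ∈ S} => (1 : ℂ)) = monoS S 0 0 := by
        funext z; simp [monoS]
      rw [heq]
      exact Submodule.subset_span ⟨(0, 0), rfl⟩
    simpa using h1
  | insert a T' hw ih =>
    have : (fun z : {z // z ∈ S} => ∏ w ∈ insert a T',
        (((z : ℂ) - w) * ((starRingEnd ℂ) (z : ℂ) - (starRingEnd ℂ) w)))
        = fun z : {z // z ∈ S} =>
            ((z : ℂ) - a) * ((starRingEnd ℂ) (z : ℂ) - (starRingEnd ℂ) a) *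
            ∏ w ∈ T', (((z : ℂ) - w) * ((starRingEnd ℂ) (z : ℂ) - (starRingEnd ℂ) w)) := by
      funext z; rw [Finset.prod_insert hw]
    rw [this]
    exact factor_mul_mem_Wall S a ih

set_option maxHeartbeats 1000000 in
/-- the key cardinality bound -/
lemma card_le_sq {n k : ℕ} (hk : 1 ≤ k) (B : MomIdx n → ℂ)
    (hB : ∀ c : MomIdx n, ¬ ((c.1.1 : ℕ) + (c.1.2 : ℕ) < k) → B c = 0)
    (S : Finset ℂ)
    (hz : ∀ z ∈ S, z ^ k =
      ∑ c : MomIdx n, B c * (starRingEnd ℂ) z ^ (c.1.1 : ℕ) * z ^ (c.1.2 : ℕ)) :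
    S.card ≤ k ^ 2 := by
  classical
  have hWle : Wall S ≤ Wlow k S := by
    rw [Wall, Submodule.span_le]
    rintro x ⟨⟨i, j⟩, rfl⟩
    exact mono_mem_Wlow hk B hB S hz i j
  -- indicators belong to Wlow
  have hsingle : ∀ p : {z // z ∈ S}, (Pi.single p (1 : ℂ)) ∈ Wlow k S := by
    intro p
    set g : {z // z ∈ S} → ℂ := fun z => ∏ w ∈ S.erase (p : ℂ),
      (((z : ℂ) - w) * ((starRingEnd ℂ) (z : ℂ) - (starRingEnd ℂ) w)) with hg
    have hgW : g ∈ Wlow k S := hWle (prod_mem_Wall S (S.erase (p : ℂ)))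
    have hgp : g p ≠ 0 := by
      rw [hg]
      refine Finset.prod_ne_zero_iff.2 fun w hw => ?_
      have hwp : w ≠ (p : ℂ) := Finset.ne_of_mem_erase hw
      apply mul_ne_zero
      · exact sub_ne_zero.2 (fun h => hwp h.symm)
      · exact sub_ne_zero.2 (fun h => hwp ((starRingEnd ℂ).injective h).symm)
    have hsing : Pi.single p (1 : ℂ) = (g p)⁻¹ • g := by
      funext q
      by_cases hq : q = p
      · subst hq; simp [Pi.single_apply, inv_mul_cancel₀ hgp]
      · have hq0 : g q = 0 := by
          rw [hg]
          refine Finset.prod_eq_zero (Finset.mem_erase.2 ⟨?_, q.2⟩) ?_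
          · exact fun h => hq (Subtype.ext h)
          · simp
        simp [Pi.single_apply, hq, hq0]
    rw [hsing]
    exact Submodule.smul_mem _ _ hgW
  -- linear independence of indicators
  have hli : LinearIndependent ℂ (fun p : {z // z ∈ S} => Pi.single p (1 : ℂ)) := by
    have := (Pi.basisFun ℂ {z // z ∈ S}).linearIndependent
    convert this using 1
    funext p
    simp [Pi.basisFun_apply]
  have hfd : FiniteDimensional ℂ (Wlow k S) :=
    FiniteDimensional.span_of_finite ℂ (Set.finite_range _)
  have hli' : LinearIndependent ℂ
      (fun p : {z // z ∈ S} => (⟨Pi.single p 1, hsingle p⟩ : Wlow k S)) := by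
    exact LinearIndependent.of_comp ((Wlow k S).subtype) hli
  have hcard := hli'.fintype_card_le_finrank
  have hrank : Module.finrank ℂ (Wlow k S) ≤ k ^ 2 := by
    have := finrank_range_le_card (R := ℂ)
      (fun p : Fin k × Fin k => monoS S (p.1 : ℕ) (p.2 : ℕ))
    have h2 : Set.finrank ℂ (Set.range fun p : Fin k × Fin k => monoS S (p.1 : ℕ) (p.2 : ℕ))
        ≤ k ^ 2 := by
      simpa [Fintype.card_prod, sq] using this
    exact h2
  calc S.card = Fintype.card {z // z ∈ S} := (Fintype.card_coe S).symm
    _ ≤ Module.finrank ℂ (Wlow k S) := hcard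
    _ ≤ k ^ 2 := hrank



noncomputable def mono (i j : ℕ) : ℂ → ℂ := fun z => (starRingEnd ℂ) z ^ i * z ^ j

noncomputable def Fp {n : ℕ} (k : ℕ) (A : MomIdx n → ℂ) : ℂ → ℂ := fun z =>
  z ^ k - ∑ c : MomIdx n,
    (starRingEnd ℂ) (A c) * (starRingEnd ℂ) z ^ (c.1.1 : ℕ) * z ^ (c.1.2 : ℕ)

variable {n k : ℕ} {γ : ℕ → ℕ → ℂ} {μ : Measure ℂ} {A : MomIdx n → ℂ}

lemma integrable_mono (hμ : IsRepr n γ μ) {i j : ℕ} (hij : i + j ≤ 2 * n) :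
    Integrable (mono i j) μ := (hμ i j hij).1

lemma integral_mono (hμ : IsRepr n γ μ) {i j : ℕ} (hij : i + j ≤ 2 * n) :
    ∫ z, mono i j z ∂μ = γ i j := (hμ i j hij).2

lemma mono_mul_conjF (i j : ℕ) :
    (fun z => mono i j z * (starRingEnd ℂ) (Fp k A z)) =
      fun z => mono (i + k) j z
        - ∑ c : MomIdx n, A c * mono (i + (c.1.2 : ℕ)) (j + (c.1.1 : ℕ)) z := by
  funext z
  simp only [Fp, mono, map_sub, map_pow, map_sum, map_mul, Complex.conj_conj]
  rw [mul_sub, Finset.mul_sum]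
  congr 1
  · rw [pow_add]; ring
  · refine Finset.sum_congr rfl fun c _ => ?_
    simp only [pow_add]; ring

lemma integrable_mono_mul_conjF (hμ : IsRepr n γ μ) (hkn : k ≤ n) {i j : ℕ}
    (hij : i + j ≤ n) :
    Integrable (fun z => mono i j z * (starRingEnd ℂ) (Fp k A z)) μ := by
  rw [mono_mul_conjF]
  refine ((integrable_mono hμ (by omega)).sub ?_)
  refine integrable_finset_sum _ fun c _ => ?_
  have hc := c.2
  exact (integrable_mono hμ (by omega)).const_mul _

lemma row_integral_zero (hμ : IsRepr n γ μ) (hkn : k ≤ n)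
    (hrel' : ∀ i j : ℕ, i + j ≤ n → γ (i + k) j =
      ∑ c : MomIdx n, A c * γ (i + (c.1.2 : ℕ)) (j + (c.1.1 : ℕ)))
    {i j : ℕ} (hij : i + j ≤ n) :
    ∫ z, mono i j z * (starRingEnd ℂ) (Fp k A z) ∂μ = 0 := by
  rw [mono_mul_conjF]
  rw [integral_sub (integrable_mono hμ (by omega))
    (integrable_finset_sum _ fun c _ => by
      have hc := c.2
      exact (integrable_mono hμ (by omega)).const_mul _)]
  rw [integral_finset_sum _ fun c _ => by
      have hc := c.2
      exact (integrable_mono hμ (by omega)).const_mul _]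
  rw [integral_mono hμ (by omega)]
  have : ∀ c : MomIdx n, c ∈ (Finset.univ : Finset (MomIdx n)) →
      ∫ z, A c * mono (i + (c.1.2 : ℕ)) (j + (c.1.1 : ℕ)) z ∂μ =
        A c * γ (i + (c.1.2 : ℕ)) (j + (c.1.1 : ℕ)) := by
    intro c _
    have hc := c.2
    rw [integral_const_mul, integral_mono hμ (by omega)]
  rw [Finset.sum_congr rfl this, hrel' i j hij, sub_self]

lemma integrable_FconjF (hμ : IsRepr n γ μ) (hkn : k ≤ n) (hk : 1 ≤ k) :
    Integrable (fun z => Fp k A z * (starRingEnd ℂ) (Fp k A z)) μ := by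
  have hdec : (fun z => Fp k A z * (starRingEnd ℂ) (Fp k A z)) =
      fun z => mono 0 k z * (starRingEnd ℂ) (Fp k A z)
        - ∑ c : MomIdx n,
            (starRingEnd ℂ) (A c) * (mono (c.1.1 : ℕ) (c.1.2 : ℕ) z *
              (starRingEnd ℂ) (Fp k A z)) := by
    funext z
    have hF : Fp k A z = mono 0 k z
        - ∑ c : MomIdx n, (starRingEnd ℂ) (A c) * mono (c.1.1 : ℕ) (c.1.2 : ℕ) z := by
      simp only [Fp, mono, pow_zero, one_mul, mul_assoc]
    calc Fp k A z * (starRingEnd ℂ) (Fp k A z)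
        = (mono 0 k z - ∑ c : MomIdx n, (starRingEnd ℂ) (A c) *
            mono (c.1.1 : ℕ) (c.1.2 : ℕ) z) * (starRingEnd ℂ) (Fp k A z) := by rw [← hF]
      _ = _ := by
            rw [sub_mul, Finset.sum_mul]
            congr 1
            exact Finset.sum_congr rfl (fun c _ => by ring)
  rw [hdec]
  refine (integrable_mono_mul_conjF hμ hkn (by omega)).sub ?_
  refine integrable_finset_sum _ fun c _ => ?_
  exact (integrable_mono_mul_conjF hμ hkn c.2).const_mul _

lemma integral_FconjF_zero (hμ : IsRepr n γ μ) (hkn : k ≤ n) (hk : 1 ≤ k)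
    (hrel' : ∀ i j : ℕ, i + j ≤ n → γ (i + k) j =
      ∑ c : MomIdx n, A c * γ (i + (c.1.2 : ℕ)) (j + (c.1.1 : ℕ))) :
    ∫ z, Fp k A z * (starRingEnd ℂ) (Fp k A z) ∂μ = 0 := by
  have hdec : (fun z => Fp k A z * (starRingEnd ℂ) (Fp k A z)) =
      fun z => mono 0 k z * (starRingEnd ℂ) (Fp k A z)
        - ∑ c : MomIdx n,
            (starRingEnd ℂ) (A c) * (mono (c.1.1 : ℕ) (c.1.2 : ℕ) z *
              (starRingEnd ℂ) (Fp k A z)) := by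
    funext z
    have hF : Fp k A z = mono 0 k z
        - ∑ c : MomIdx n, (starRingEnd ℂ) (A c) * mono (c.1.1 : ℕ) (c.1.2 : ℕ) z := by
      simp only [Fp, mono, pow_zero, one_mul, mul_assoc]
    calc Fp k A z * (starRingEnd ℂ) (Fp k A z)
        = (mono 0 k z - ∑ c : MomIdx n, (starRingEnd ℂ) (A c) *
            mono (c.1.1 : ℕ) (c.1.2 : ℕ) z) * (starRingEnd ℂ) (Fp k A z) := by rw [← hF]
      _ = _ := by
            rw [sub_mul, Finset.sum_mul]
            congr 1
            exact Finset.sum_congr rfl (fun c _ => by ring)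
  rw [hdec]
  rw [integral_sub (integrable_mono_mul_conjF hμ hkn (by omega))
    (integrable_finset_sum _ fun c _ =>
      (integrable_mono_mul_conjF hμ hkn c.2).const_mul _)]
  rw [integral_finset_sum _ fun c _ =>
      (integrable_mono_mul_conjF hμ hkn c.2).const_mul _]
  rw [row_integral_zero hμ hkn hrel' (by omega)]
  simp only [integral_const_mul]
  rw [Finset.sum_congr rfl (fun c _ => by
    rw [row_integral_zero hμ hkn hrel' c.2, mul_zero])]
  simp

lemma suppF (hμ : IsRepr n γ μ) (hkn : k ≤ n) (hk : 1 ≤ k)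
    (hrel' : ∀ i j : ℕ, i + j ≤ n → γ (i + k) j =
      ∑ c : MomIdx n, A c * γ (i + (c.1.2 : ℕ)) (j + (c.1.1 : ℕ))) :
    μ {z | Fp k A z ≠ 0} = 0 := by
  have hInt : Integrable (fun z => Fp k A z * (starRingEnd ℂ) (Fp k A z)) μ :=
    integrable_FconjF hμ hkn hk
  have hIntRe : Integrable (fun z => Complex.normSq (Fp k A z)) μ := by
    have := hInt.re
    refine this.congr (Filter.Eventually.of_forall fun z => ?_)
    simp [Complex.mul_conj]
  have hIntZero : ∫ z, Complex.normSq (Fp k A z) ∂μ = 0 := by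
    have h2 := integral_re hInt
    rw [integral_FconjF_zero hμ hkn hk hrel'] at h2
    simp only [RCLike.re_to_complex, Complex.zero_re] at h2
    rw [← h2]
    exact integral_congr_ae (Filter.Eventually.of_forall fun z => by
      simp [Complex.mul_conj])
  have hae := (integral_eq_zero_iff_of_nonneg
    (fun z => Complex.normSq_nonneg _) hIntRe).1 hIntZero
  have hae' : ∀ᵐ z ∂μ, Fp k A z = 0 := by
    filter_upwards [hae] with z hz
    exact Complex.normSq_eq_zero.1 hz
  exact hae'


lemma meas_inter_singleton_of_mem (μ : Measure ℂ) {s : Set ℂ} {p : ℂ} (hp : p ∈ s) :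
    μ (s ∩ {p}) = μ {p} := by
  congr 1; ext q
  simp only [Set.mem_inter_iff, Set.mem_singleton_iff]
  exact ⟨fun h => h.2, fun h => ⟨h ▸ hp, h⟩⟩

lemma meas_inter_singleton_of_not_mem (μ : Measure ℂ) {s : Set ℂ} {p : ℂ} (hp : p ∉ s) :
    μ (s ∩ {p}) = 0 := by
  have h : s ∩ {p} = ∅ := by
    ext q
    simp only [Set.mem_inter_iff, Set.mem_singleton_iff, Set.mem_empty_iff_false, iff_false,
      not_and]
    rintro hq rfl; exact hp hq
  rw [h, measure_empty]

lemma meas_eq_sum_atoms (μ : Measure ℂ) (V : Finset ℂ) (hV : μ ((V : Set ℂ)ᶜ) = 0)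
    {s : Set ℂ} (hs : MeasurableSet s) : μ s = ∑ p ∈ V, μ (s ∩ {p}) := by
  have hVm : MeasurableSet (V : Set ℂ) := V.finite_toSet.measurableSet
  have h1 : μ s = μ (s ∩ ↑V) := by
    have h2 := measure_inter_add_diff (μ := μ) s hVm
    have h0 : μ (s \ ↑V) = 0 := measure_mono_null (fun z hz => hz.2) hV
    rw [← h2, h0, add_zero]
  rw [h1]
  have h2 : s ∩ ↑V = ⋃ p ∈ V, s ∩ {p} := by
    ext q
    simp only [Set.mem_inter_iff, Finset.mem_coe, Set.mem_iUnion, Set.mem_singleton_iff,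
      exists_prop]
    constructor
    · rintro ⟨hqs, hqV⟩; exact ⟨q, hqV, hqs, rfl⟩
    · rintro ⟨p, hpV, hqs, rfl⟩; exact ⟨hqs, hpV⟩
  rw [h2]
  rw [measure_biUnion_finset ?_ fun p _ => hs.inter (measurableSet_singleton p)]
  intro p _ q _ hpq
  refine Set.disjoint_left.2 ?_
  rintro x ⟨_, hx1⟩ ⟨_, hx2⟩
  rw [Set.mem_singleton_iff] at hx1 hx2
  subst hx1; subst hx2
  exact hpq rfl

lemma measure_eq_dirac_sum (μ : Measure ℂ) [IsFiniteMeasure μ] (V : Finset ℂ)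
    (hV : μ ((V : Set ℂ)ᶜ) = 0) :
    ∃ N ≤ V.card, ∃ (x : Fin N → ℂ) (ρ : Fin N → ℝ),
      Function.Injective x ∧ (∀ m, 0 < ρ m) ∧
      μ = ∑ m, ENNReal.ofReal (ρ m) • Measure.dirac (x m) := by
  classical
  set T := V.filter (fun p => μ {p} ≠ 0) with hT
  have hTV : T ⊆ V := Finset.filter_subset _ _
  set x : Fin T.card → ℂ := fun m => ((T.equivFin.symm m : {q // q ∈ T}) : ℂ) with hx
  have hxT : ∀ m, x m ∈ T := fun m => (T.equivFin.symm m).2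
  refine ⟨T.card, Finset.card_filter_le _ _, x,
    fun m => (μ {x m}).toReal, ?_, ?_, ?_⟩
  · intro m m' h
    exact T.equivFin.symm.injective (Subtype.coe_injective h)
  · intro m
    refine ENNReal.toReal_pos ?_ (measure_ne_top μ _)
    exact (Finset.mem_filter.1 (hxT m)).2
  · ext s hs
    rw [meas_eq_sum_atoms μ V hV hs, Measure.finset_sum_apply]
    have hterm : ∀ m : Fin T.card,
        (ENNReal.ofReal ((μ {x m}).toReal) • Measure.dirac (x m)) s
          = μ {x m} * Set.indicator s (1 : ℂ → ENNReal) (x m) := by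
      intro m
      rw [Measure.smul_apply, ENNReal.ofReal_toReal (measure_ne_top μ _),
        Measure.dirac_apply' _ hs, smul_eq_mul]
    rw [Finset.sum_congr rfl fun m _ => hterm m]
    set g : ℂ → ENNReal := fun p => μ {p} * Set.indicator s (1 : ℂ → ENNReal) p with hg
    have e1 : ∑ m : Fin T.card, μ {x m} * Set.indicator s (1 : ℂ → ENNReal) (x m)
        = ∑ q : {q // q ∈ T}, g ((q : ℂ)) := by
      exact Equiv.sum_comp T.equivFin.symm (fun q : {q // q ∈ T} => g ((q : ℂ)))
    have e2 : ∑ q : {q // q ∈ T}, g ((q : ℂ)) = ∑ p ∈ T, g p := Finset.sum_coe_sort T g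
    rw [e1, e2]
    have e3 : ∑ p ∈ T, g p = ∑ p ∈ V, g p := by
      refine Finset.sum_subset hTV fun p hpV hpT => ?_
      have : μ {p} = 0 := by
        by_contra hne
        exact hpT (Finset.mem_filter.2 ⟨hpV, hne⟩)
      rw [hg]; simp [this]
    rw [e3]
    refine Finset.sum_congr rfl fun p _ => ?_
    by_cases hp : p ∈ s
    · rw [meas_inter_singleton_of_mem μ hp, hg]
      simp [Set.indicator_of_mem hp]
    · rw [meas_inter_singleton_of_not_mem μ hp, hg]
      simp [Set.indicator_of_notMem hp]


section Part4

lemma single_mem_Wlow {n k : ℕ} (hk : 1 ≤ k) (B : MomIdx n → ℂ)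
    (hB : ∀ c : MomIdx n, ¬ ((c.1.1 : ℕ) + (c.1.2 : ℕ) < k) → B c = 0)
    (S : Finset ℂ)
    (hz : ∀ z ∈ S, z ^ k =
      ∑ c : MomIdx n, B c * (starRingEnd ℂ) z ^ (c.1.1 : ℕ) * z ^ (c.1.2 : ℕ))
    (p : {z // z ∈ S}) : (Pi.single p (1 : ℂ)) ∈ Wlow k S := by
  classical
  have hWle : Wall S ≤ Wlow k S := by
    rw [Wall, Submodule.span_le]
    rintro x ⟨⟨i, j⟩, rfl⟩
    exact mono_mem_Wlow hk B hB S hz i j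
  set g : {z // z ∈ S} → ℂ := fun z => ∏ w ∈ S.erase (p : ℂ),
    (((z : ℂ) - w) * ((starRingEnd ℂ) (z : ℂ) - (starRingEnd ℂ) w)) with hg
  have hgW : g ∈ Wlow k S := hWle (prod_mem_Wall S (S.erase (p : ℂ)))
  have hgp : g p ≠ 0 := by
    rw [hg]
    refine Finset.prod_ne_zero_iff.2 fun w hw => ?_
    have hwp : w ≠ (p : ℂ) := Finset.ne_of_mem_erase hw
    apply mul_ne_zero
    · exact sub_ne_zero.2 (fun h => hwp h.symm)
    · exact sub_ne_zero.2 (fun h => hwp ((starRingEnd ℂ).injective h).symm)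
  have hsing : Pi.single p (1 : ℂ) = (g p)⁻¹ • g := by
    funext q
    by_cases hq : q = p
    · subst hq; simp [Pi.single_apply, inv_mul_cancel₀ hgp]
    · have hq0 : g q = 0 := by
        rw [hg]
        refine Finset.prod_eq_zero (Finset.mem_erase.2 ⟨?_, q.2⟩) ?_
        · exact fun h => hq (Subtype.ext h)
        · simp
      simp [Pi.single_apply, hq, hq0]
  rw [hsing]
  exact Submodule.smul_mem _ _ hgW

lemma exists_interp {n k : ℕ} (hk : 1 ≤ k) (B : MomIdx n → ℂ)
    (hB : ∀ c : MomIdx n, ¬ ((c.1.1 : ℕ) + (c.1.2 : ℕ) < k) → B c = 0)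
    (S : Finset ℂ)
    (hz : ∀ z ∈ S, z ^ k =
      ∑ c : MomIdx n, B c * (starRingEnd ℂ) z ^ (c.1.1 : ℕ) * z ^ (c.1.2 : ℕ))
    {p : ℂ} (hp : p ∈ S) :
    ∃ co : Fin k × Fin k → ℂ, ∀ z ∈ S,
      ∑ q : Fin k × Fin k, co q * ((starRingEnd ℂ) z ^ (q.1 : ℕ) * z ^ (q.2 : ℕ))
        = if z = p then 1 else 0 := by
  classical
  have hmem := single_mem_Wlow hk B hB S hz ⟨p, hp⟩
  rw [Wlow, Submodule.mem_span_range_iff_exists_fun] at hmem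
  obtain ⟨co, hco⟩ := hmem
  refine ⟨co, fun z hzS => ?_⟩
  have hev := congrFun hco ⟨z, hzS⟩
  rw [Finset.sum_apply] at hev
  simp only [Pi.smul_apply, smul_eq_mul, monoS] at hev
  rw [hev, Pi.single_apply]
  by_cases hzp : z = p
  · simp [hzp]
  · have hne : (⟨z, hzS⟩ : {w // w ∈ S}) ≠ ⟨p, hp⟩ := fun h => hzp (congrArg Subtype.val h)
    simp [hzp, hne]

lemma zeroset_finite {n k : ℕ} (hk : 1 ≤ k) {A : MomIdx n → ℂ}
    (hA : ∀ c : MomIdx n, ¬ ((c.1.1 : ℕ) + (c.1.2 : ℕ) < k) → A c = 0) :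
    {z : ℂ | Fp k A z = 0}.Finite := by
  classical
  by_contra hinf
  obtain ⟨t, hts, htfin, htcard⟩ :=
    Set.Infinite.exists_subset_ncard_eq hinf (k ^ 2 + 1)
  have hcard := card_le_sq hk (fun c => (starRingEnd ℂ) (A c))
    (fun c hc => by rw [hA c hc, map_zero]) htfin.toFinset
    (fun z hzS => by
      have hzt : z ∈ t := htfin.mem_toFinset.1 hzS
      have hz0 : Fp k A z = 0 := hts hzt
      rw [Fp, sub_eq_zero] at hz0
      exact hz0)
  rw [← Set.ncard_eq_toFinset_card t htfin, htcard] at hcard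
  omega

lemma mem_zeroset_eq {n k : ℕ} {A : MomIdx n → ℂ} {z : ℂ} (hz : Fp k A z = 0) :
    z ^ k = ∑ c : MomIdx n,
      (starRingEnd ℂ) (A c) * (starRingEnd ℂ) z ^ (c.1.1 : ℕ) * z ^ (c.1.2 : ℕ) := by
  rw [Fp, sub_eq_zero] at hz
  exact hz

lemma isFiniteMeasure_of_isRepr {n : ℕ} {γ : ℕ → ℕ → ℂ} {μ : Measure ℂ}
    (hμ : IsRepr n γ μ) : IsFiniteMeasure μ := by
  have h := (hμ 0 0 (by omega)).1
  simp only [pow_zero, one_mul] at h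
  rcases integrable_const_iff.1 h with h1 | h1
  · exact absurd h1 one_ne_zero
  · exact h1

end Part4


section Part5

variable {n k : ℕ} {γ : ℕ → ℕ → ℂ} {A : MomIdx n → ℂ}

lemma point_mass_eq (hk : 1 ≤ k) (hkn : k ≤ n)
    (hA : ∀ c : MomIdx n, ¬ ((c.1.1 : ℕ) + (c.1.2 : ℕ) < k) → A c = 0)
    (hrel' : ∀ i j : ℕ, i + j ≤ n → γ (i + k) j =
      ∑ c : MomIdx n, A c * γ (i + (c.1.2 : ℕ)) (j + (c.1.1 : ℕ)))
    {μ ν : Measure ℂ} (hμ : IsRepr n γ μ) (hν : IsRepr n γ ν) (p : ℂ) :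
    ν {p} = μ {p} := by
  classical
  have hμf : IsFiniteMeasure μ := isFiniteMeasure_of_isRepr hμ
  have hνf : IsFiniteMeasure ν := isFiniteMeasure_of_isRepr hν
  have hμ0 : μ {z | Fp k A z ≠ 0} = 0 := suppF hμ hkn hk hrel'
  have hν0 : ν {z | Fp k A z ≠ 0} = 0 := suppF hν hkn hk hrel'
  by_cases hp : Fp k A p = 0
  · set Vfin := (zeroset_finite hk hA).toFinset with hV
    have hpV : p ∈ Vfin := (Set.Finite.mem_toFinset _).2 hp
    obtain ⟨co, hco⟩ := exists_interp hk (fun c => (starRingEnd ℂ) (A c))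
      (fun c hc => by rw [hA c hc, map_zero]) Vfin
      (fun z hzS => mem_zeroset_eq
        (((zeroset_finite hk hA).mem_toFinset).1 hzS)) hpV
    have key : ∀ ξ : Measure ℂ, IsRepr n γ ξ → ξ {z | Fp k A z ≠ 0} = 0 →
        ((ξ {p}).toReal : ℂ) = ∑ q : Fin k × Fin k, co q * γ (q.1 : ℕ) (q.2 : ℕ) := by
      intro ξ hξ hξ0
      have h1 : ∫ z, (∑ q : Fin k × Fin k, co q * mono (q.1 : ℕ) (q.2 : ℕ) z) ∂ξ
          = ∑ q : Fin k × Fin k, co q * γ (q.1 : ℕ) (q.2 : ℕ) := by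
        rw [integral_finset_sum _ fun q _ => (integrable_mono hξ
          (by have h1 := q.1.2; have h2 := q.2.2; omega)).const_mul _]
        refine Finset.sum_congr rfl fun q _ => ?_
        rw [integral_const_mul, integral_mono hξ
          (by have h1 := q.1.2; have h2 := q.2.2; omega)]
      have h2 : (fun z => ∑ q : Fin k × Fin k, co q * mono (q.1 : ℕ) (q.2 : ℕ) z)
          =ᵐ[ξ] Set.indicator {p} (fun _ => (1 : ℂ)) := by
        have hae : ∀ᵐ z ∂ξ, Fp k A z = 0 := by
          rw [MeasureTheory.ae_iff]
          exact hξ0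
        filter_upwards [hae] with z hz
        have hzV : z ∈ Vfin := (Set.Finite.mem_toFinset _).2 hz
        have hcoz := hco z hzV
        simp only [mono]
        rw [hcoz]
        by_cases hzp : z = p
        · simp [hzp]
        · rw [if_neg hzp, Set.indicator_of_notMem (by simpa using hzp)]
      have h3 : ∫ z, (∑ q : Fin k × Fin k, co q * mono (q.1 : ℕ) (q.2 : ℕ) z) ∂ξ
          = ((ξ {p}).toReal : ℂ) := by
        rw [integral_congr_ae h2,
          integral_indicator_const (1 : ℂ) (measurableSet_singleton p)]
        simp [Complex.real_smul, Measure.real]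
      exact h3.symm.trans h1
    have hkey := (key ν hν hν0).trans (key μ hμ hμ0).symm
    have htr : (ν {p}).toReal = (μ {p}).toReal := by exact_mod_cast hkey
    exact (ENNReal.toReal_eq_toReal_iff' (measure_ne_top ν _) (measure_ne_top μ _)).1 htr
  · have h1 : ν {p} = 0 := measure_mono_null
      (fun q hq => by rw [Set.mem_singleton_iff] at hq; subst hq; exact hp) hν0
    have h2 : μ {p} = 0 := measure_mono_null
      (fun q hq => by rw [Set.mem_singleton_iff] at hq; subst hq; exact hp) hμ0
    rw [h1, h2]

lemma repr_unique (hk : 1 ≤ k) (hkn : k ≤ n)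
    (hA : ∀ c : MomIdx n, ¬ ((c.1.1 : ℕ) + (c.1.2 : ℕ) < k) → A c = 0)
    (hrel' : ∀ i j : ℕ, i + j ≤ n → γ (i + k) j =
      ∑ c : MomIdx n, A c * γ (i + (c.1.2 : ℕ)) (j + (c.1.1 : ℕ)))
    {μ ν : Measure ℂ} (hμ : IsRepr n γ μ) (hν : IsRepr n γ ν) : ν = μ := by
  classical
  have hVfin := zeroset_finite hk hA
  have hcompl : (↑hVfin.toFinset : Set ℂ)ᶜ = {z | Fp k A z ≠ 0} := by
    ext z
    simp [Set.Finite.mem_toFinset]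
  have hμ0 : μ ((↑hVfin.toFinset : Set ℂ)ᶜ) = 0 := by
    rw [hcompl]; exact suppF hμ hkn hk hrel'
  have hν0 : ν ((↑hVfin.toFinset : Set ℂ)ᶜ) = 0 := by
    rw [hcompl]; exact suppF hν hkn hk hrel'
  ext s hs
  rw [meas_eq_sum_atoms ν hVfin.toFinset hν0 hs, meas_eq_sum_atoms μ hVfin.toFinset hμ0 hs]
  refine Finset.sum_congr rfl fun p _ => ?_
  by_cases hp : p ∈ s
  · rw [meas_inter_singleton_of_mem ν hp, meas_inter_singleton_of_mem μ hp]
    exact point_mass_eq hk hkn hA hrel' hμ hν p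
  · rw [meas_inter_singleton_of_not_mem ν hp, meas_inter_singleton_of_not_mem μ hp]

end Part5

end CF

/-- If `γ^{(2n)}` has a representing measure and `M(n)(γ)` admits an analytic relation
`Z^k = ∑_{i+j<k} a_{ij} Z̄^i Z^j` for some `k ≤ n`, then `γ^{(2n)}` has a unique
representing measure, which is finitely atomic with at most `k²` atoms. -/
theorem analytic_relation_unique_representing_measure (n k : ℕ) (hk : 1 ≤ k) (hkn : k ≤ n)
    (γ : ℕ → ℕ → ℂ) (a : ℕ → ℕ → ℂ)
    (hex : ∃ μ : Measure ℂ, IsRepr n γ μ)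
    (hrel : ∀ r : MomIdx n,
      momentMatrix n γ r ⟨(⟨0, Nat.succ_pos n⟩, ⟨k, Nat.lt_succ_of_le hkn⟩), by simpa using hkn⟩ =
        ∑ c : MomIdx n,
          (if (c.1.1 : ℕ) + (c.1.2 : ℕ) < k then a (c.1.1 : ℕ) (c.1.2 : ℕ) else 0) *
            momentMatrix n γ r c) :
    ∃ μ : Measure ℂ, IsRepr n γ μ ∧ (∀ ν : Measure ℂ, IsRepr n γ ν → ν = μ) ∧
      ∃ N ≤ k ^ 2, ∃ (x : Fin N → ℂ) (ρ : Fin N → ℝ),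
        Function.Injective x ∧ (∀ m, 0 < ρ m) ∧
        μ = ∑ m, ENNReal.ofReal (ρ m) • Measure.dirac (x m) := by
  classical
  obtain ⟨μ, hμ⟩ := hex
  set A : MomIdx n → ℂ := fun c =>
    if (c.1.1 : ℕ) + (c.1.2 : ℕ) < k then a (c.1.1 : ℕ) (c.1.2 : ℕ) else 0 with hA
  have hA0 : ∀ c : MomIdx n, ¬ ((c.1.1 : ℕ) + (c.1.2 : ℕ) < k) → A c = 0 := by
    intro c hc
    rw [hA]
    simp only []
    exact if_neg hc
  have hrel' : ∀ i j : ℕ, i + j ≤ n → γ (i + k) j =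
      ∑ c : MomIdx n, A c * γ (i + (c.1.2 : ℕ)) (j + (c.1.1 : ℕ)) := by
    intro i j hij
    have h := hrel ⟨(⟨i, by omega⟩, ⟨j, by omega⟩), hij⟩
    simp only [momentMatrix] at h
    simpa [hA] using h
  have hμf : IsFiniteMeasure μ := CF.isFiniteMeasure_of_isRepr hμ
  have hVfin := CF.zeroset_finite hk hA0
  have hcompl : (↑hVfin.toFinset : Set ℂ)ᶜ = {z | CF.Fp k A z ≠ 0} := by
    ext z
    simp [Set.Finite.mem_toFinset]
  have hμ0 : μ ((↑hVfin.toFinset : Set ℂ)ᶜ) = 0 := by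
    rw [hcompl]; exact CF.suppF hμ hkn hk hrel'
  obtain ⟨N, hN, x, ρ, hinj, hpos, hsum⟩ := CF.measure_eq_dirac_sum μ hVfin.toFinset hμ0
  have hcard : hVfin.toFinset.card ≤ k ^ 2 :=
    CF.card_le_sq hk (fun c => (starRingEnd ℂ) (A c))
      (fun c hc => by rw [hA0 c hc, map_zero]) hVfin.toFinset
      (fun z hzS => CF.mem_zeroset_eq ((hVfin.mem_toFinset).1 hzS))
  exact ⟨μ, hμ, fun ν hν => CF.repr_unique hk hkn hA0 hrel' hμ hν,
    N, le_trans hN hcard, x, ρ, hinj, hpos, hsum⟩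
end
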